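/- arXiv:1403.2410 — 4 statements merged into one kernel-verified Lean document; each statement's English description precedes it below -/
import Mathlib

section
/- Let Λ_{D₄} be the D₄ root lattice, i.e. ℤ⁴ with Gram matrix [[2,−1,0,0],[−1,2,−1,−1],[0,−1,2,0],[0,−1,0,2]]. Then the group SO₀(Λ_{D₄}) of determinant-1 automorphisms of Λ_{D₄} that induce the identity map on the discriminant group Λ_{D₄}*/Λ_{D₄} has order 96. -/
/-!
STATEMENT 8: The group SO₀(Λ_{D₄}) of determinant-1 automorphisms of the D₄ root
lattice that induce the identity map on the discriminant group has order 96.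
-/

open Matrix

open Matrix

def IsIntVec {n : ℕ} (x : Fin n → ℚ) : Prop := ∀ i, ∃ c : ℤ, x i = (c : ℚ)

lemma IsIntVec.add {n : ℕ} {u v : Fin n → ℚ} (hu : IsIntVec u) (hv : IsIntVec v) :
    IsIntVec (u + v) := by
  intro i
  obtain ⟨c, hc⟩ := hu i
  obtain ⟨d, hd⟩ := hv i
  exact ⟨c + d, by simp [hc, hd]⟩

lemma IsIntVec.neg {n : ℕ} {u : Fin n → ℚ} (hu : IsIntVec u) : IsIntVec (-u) := by
  intro i
  obtain ⟨c, hc⟩ := hu i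
  exact ⟨-c, by simp [hc]⟩

lemma mapq_mul {n : ℕ} (M N : Matrix (Fin n) (Fin n) ℤ) :
    (M * N).map ((↑) : ℤ → ℚ) = M.map ((↑) : ℤ → ℚ) * N.map ((↑) : ℤ → ℚ) := by
  ext i j
  simp [Matrix.mul_apply]

lemma mapq_one {n : ℕ} : ((1 : Matrix (Fin n) (Fin n) ℤ)).map ((↑) : ℤ → ℚ) = 1 :=
  Matrix.map_one _ Int.cast_zero Int.cast_one

lemma intvec_vecMul {n : ℕ} {x : Fin n → ℚ} (hx : IsIntVec x)
    (Z : Matrix (Fin n) (Fin n) ℤ) :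
    IsIntVec (Matrix.vecMul x (Z.map ((↑) : ℤ → ℚ))) := by
  intro i
  choose c hc using hx
  refine ⟨∑ j, c j * Z j i, ?_⟩
  simp only [Matrix.vecMul, dotProduct, Matrix.map_apply]
  push_cast
  exact Finset.sum_congr rfl fun j _ => by rw [hc j]

lemma dual_pres {n : ℕ} (Q : Matrix (Fin n) (Fin n) ℤ) (a : (Matrix (Fin n) (Fin n) ℤ)ˣ)
    (ha : (a : Matrix (Fin n) (Fin n) ℤ) * Q * (a : Matrix (Fin n) (Fin n) ℤ)ᵀ = Q)
    {x : Fin n → ℚ} (hx : IsIntVec (Matrix.vecMul x (Q.map ((↑) : ℤ → ℚ)))) :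
    IsIntVec (Matrix.vecMul (Matrix.vecMul x ((a : Matrix (Fin n) (Fin n) ℤ).map ((↑) : ℤ → ℚ)))
      (Q.map ((↑) : ℤ → ℚ))) := by
  have key : (a : Matrix (Fin n) (Fin n) ℤ) * Q = Q * ((a⁻¹ : (Matrix (Fin n) (Fin n) ℤ)ˣ) : Matrix (Fin n) (Fin n) ℤ)ᵀ := by
    have h1 : (a : Matrix (Fin n) (Fin n) ℤ)ᵀ * ((a⁻¹ : (Matrix (Fin n) (Fin n) ℤ)ˣ) : Matrix (Fin n) (Fin n) ℤ)ᵀ = 1 := by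
      rw [← Matrix.transpose_mul, Units.inv_mul, Matrix.transpose_one]
    calc (a : Matrix (Fin n) (Fin n) ℤ) * Q
        = ((a : Matrix (Fin n) (Fin n) ℤ) * Q * (a : Matrix (Fin n) (Fin n) ℤ)ᵀ) *
            ((a⁻¹ : (Matrix (Fin n) (Fin n) ℤ)ˣ) : Matrix (Fin n) (Fin n) ℤ)ᵀ := by
          rw [Matrix.mul_assoc, h1, Matrix.mul_one]
      _ = Q * ((a⁻¹ : (Matrix (Fin n) (Fin n) ℤ)ˣ) : Matrix (Fin n) (Fin n) ℤ)ᵀ := by rw [ha]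
  rw [Matrix.vecMul_vecMul, ← mapq_mul, key, mapq_mul, ← Matrix.vecMul_vecMul]
  exact intvec_vecMul hx _

def SOzero {n : ℕ} (Q : Matrix (Fin n) (Fin n) ℤ) : Subgroup (Matrix (Fin n) (Fin n) ℤ)ˣ where
  carrier := {U | (U : Matrix (Fin n) (Fin n) ℤ) * Q * (U : Matrix (Fin n) (Fin n) ℤ)ᵀ = Q ∧
      (U : Matrix (Fin n) (Fin n) ℤ).det = 1 ∧
      ∀ x : Fin n → ℚ, IsIntVec (Matrix.vecMul x (Q.map ((↑) : ℤ → ℚ))) →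
        IsIntVec (Matrix.vecMul x ((U : Matrix (Fin n) (Fin n) ℤ).map ((↑) : ℤ → ℚ)) - x)}
  one_mem' := by
    refine ⟨by simp, by simp, fun x hx i => ⟨0, ?_⟩⟩
    simp [mapq_one]
  mul_mem' := by
    rintro a b ⟨ha1, ha2, ha3⟩ ⟨hb1, hb2, hb3⟩
    have hab1 : ((a * b : (Matrix (Fin n) (Fin n) ℤ)ˣ) : Matrix (Fin n) (Fin n) ℤ) * Q *
        ((a * b : (Matrix (Fin n) (Fin n) ℤ)ˣ) : Matrix (Fin n) (Fin n) ℤ)ᵀ = Q := by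
      rw [Units.val_mul, Matrix.transpose_mul]
      calc (a : Matrix (Fin n) (Fin n) ℤ) * b * Q * ((b : Matrix (Fin n) (Fin n) ℤ)ᵀ * (a : Matrix (Fin n) (Fin n) ℤ)ᵀ)
          = (a : Matrix (Fin n) (Fin n) ℤ) * ((b : Matrix (Fin n) (Fin n) ℤ) * Q * (b : Matrix (Fin n) (Fin n) ℤ)ᵀ) * (a : Matrix (Fin n) (Fin n) ℤ)ᵀ := by
            noncomm_ring
        _ = Q := by rw [hb1, ha1]
    refine ⟨hab1, by rw [Units.val_mul, Matrix.det_mul, ha2, hb2, one_mul], fun x hx => ?_⟩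
    have hy := dual_pres Q a ha1 hx
    set y := Matrix.vecMul x ((a : Matrix (Fin n) (Fin n) ℤ).map ((↑) : ℤ → ℚ)) with hydef
    have h1 : IsIntVec (Matrix.vecMul y ((b : Matrix (Fin n) (Fin n) ℤ).map ((↑) : ℤ → ℚ)) - y) :=
      hb3 y hy
    have h2 : IsIntVec (y - x) := ha3 x hx
    have hrw : Matrix.vecMul x (((a * b : (Matrix (Fin n) (Fin n) ℤ)ˣ) : Matrix (Fin n) (Fin n) ℤ).map ((↑) : ℤ → ℚ)) - x =
        (Matrix.vecMul y ((b : Matrix (Fin n) (Fin n) ℤ).map ((↑) : ℤ → ℚ)) - y) + (y - x) := by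
      rw [Units.val_mul, mapq_mul, ← Matrix.vecMul_vecMul, ← hydef]
      abel
    rw [hrw]
    exact h1.add h2
  inv_mem' := by
    rintro a ⟨ha1, ha2, ha3⟩
    have hi1 : ((a⁻¹ : (Matrix (Fin n) (Fin n) ℤ)ˣ) : Matrix (Fin n) (Fin n) ℤ) * Q *
        ((a⁻¹ : (Matrix (Fin n) (Fin n) ℤ)ˣ) : Matrix (Fin n) (Fin n) ℤ)ᵀ = Q := by
      have h1 : (a : Matrix (Fin n) (Fin n) ℤ)ᵀ * ((a⁻¹ : (Matrix (Fin n) (Fin n) ℤ)ˣ) : Matrix (Fin n) (Fin n) ℤ)ᵀ = 1 := by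
        rw [← Matrix.transpose_mul, Units.inv_mul, Matrix.transpose_one]
      have h2 : ((a⁻¹ : (Matrix (Fin n) (Fin n) ℤ)ˣ) : Matrix (Fin n) (Fin n) ℤ) * (a : Matrix (Fin n) (Fin n) ℤ) = 1 := Units.inv_mul a
      calc ((a⁻¹ : (Matrix (Fin n) (Fin n) ℤ)ˣ) : Matrix (Fin n) (Fin n) ℤ) * Q * ((a⁻¹ : (Matrix (Fin n) (Fin n) ℤ)ˣ) : Matrix (Fin n) (Fin n) ℤ)ᵀ
          = ((a⁻¹ : (Matrix (Fin n) (Fin n) ℤ)ˣ) : Matrix (Fin n) (Fin n) ℤ) * ((a : Matrix (Fin n) (Fin n) ℤ) * Q * (a : Matrix (Fin n) (Fin n) ℤ)ᵀ) * ((a⁻¹ : (Matrix (Fin n) (Fin n) ℤ)ˣ) : Matrix (Fin n) (Fin n) ℤ)ᵀ := by rw [ha1]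
        _ = (((a⁻¹ : (Matrix (Fin n) (Fin n) ℤ)ˣ) : Matrix (Fin n) (Fin n) ℤ) * (a : Matrix (Fin n) (Fin n) ℤ)) * Q * ((a : Matrix (Fin n) (Fin n) ℤ)ᵀ * ((a⁻¹ : (Matrix (Fin n) (Fin n) ℤ)ˣ) : Matrix (Fin n) (Fin n) ℤ)ᵀ) := by noncomm_ring
        _ = Q := by rw [h1, h2, Matrix.one_mul, Matrix.mul_one]
    have hi2 : ((a⁻¹ : (Matrix (Fin n) (Fin n) ℤ)ˣ) : Matrix (Fin n) (Fin n) ℤ).det = 1 := by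
      have := Matrix.det_mul ((a⁻¹ : (Matrix (Fin n) (Fin n) ℤ)ˣ) : Matrix (Fin n) (Fin n) ℤ) (a : Matrix (Fin n) (Fin n) ℤ)
      rw [Units.inv_mul, Matrix.det_one, ha2, mul_one] at this
      exact this.symm
    refine ⟨hi1, hi2, fun x hx => ?_⟩
    have hy := dual_pres Q a⁻¹ hi1 hx
    set y := Matrix.vecMul x (((a⁻¹ : (Matrix (Fin n) (Fin n) ℤ)ˣ) : Matrix (Fin n) (Fin n) ℤ).map ((↑) : ℤ → ℚ)) with hydef
    have h1 : IsIntVec (Matrix.vecMul y ((a : Matrix (Fin n) (Fin n) ℤ).map ((↑) : ℤ → ℚ)) - y) :=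
      ha3 y hy
    have hyx : Matrix.vecMul y ((a : Matrix (Fin n) (Fin n) ℤ).map ((↑) : ℤ → ℚ)) = x := by
      rw [hydef, Matrix.vecMul_vecMul, ← mapq_mul, Units.inv_mul, mapq_one, Matrix.vecMul_one]
    rw [hyx] at h1
    have : y - x = -(x - y) := by abel
    rw [this]
    exact h1.neg


/-- The Gram matrix of the D₄ root lattice. -/
def QD4 : Matrix (Fin 4) (Fin 4) ℤ := !![2,-1,0,0; -1,2,-1,-1; 0,-1,2,0; 0,-1,0,2]


set_option maxRecDepth 40000

abbrev Rt : Type := ℤ × ℤ × ℤ × ℤ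
abbrev TT : Type := Rt × Rt × Rt × Rt

instance instDecEqRt : DecidableEq Rt := inferInstance
instance instDecEqTT : DecidableEq TT := inferInstance

def Bf (u v : Fin 4 → ℤ) : ℤ :=
  2*(u 0*v 0 + u 1*v 1 + u 2*v 2 + u 3*v 3) - u 0*v 1 - u 1*v 0 - u 1*v 2 - u 2*v 1 - u 1*v 3 - u 3*v 1

def Bt (u v : Rt) : ℤ :=
  2*(u.1*v.1 + u.2.1*v.2.1 + u.2.2.1*v.2.2.1 + u.2.2.2*v.2.2.2) - u.1*v.2.1 - u.2.1*v.1 - u.2.1*v.2.2.1 - u.2.2.1*v.2.1 - u.2.1*v.2.2.2 - u.2.2.2*v.2.1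

def det4 (M : Matrix (Fin 4) (Fin 4) ℤ) : ℤ :=
  M 0 0 * (M 1 1*(M 2 2*M 3 3 - M 2 3*M 3 2) - M 1 2*(M 2 1*M 3 3 - M 2 3*M 3 1) + M 1 3*(M 2 1*M 3 2 - M 2 2*M 3 1)) - M 0 1 * (M 1 0*(M 2 2*M 3 3 - M 2 3*M 3 2) - M 1 2*(M 2 0*M 3 3 - M 2 3*M 3 0) + M 1 3*(M 2 0*M 3 2 - M 2 2*M 3 0)) + M 0 2 * (M 1 0*(M 2 1*M 3 3 - M 2 3*M 3 1) - M 1 1*(M 2 0*M 3 3 - M 2 3*M 3 0) + M 1 3*(M 2 0*M 3 1 - M 2 1*M 3 0)) - M 0 3 * (M 1 0*(M 2 1*M 3 2 - M 2 2*M 3 1) - M 1 1*(M 2 0*M 3 2 - M 2 2*M 3 0) + M 1 2*(M 2 0*M 3 1 - M 2 1*M 3 0))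

def detT (t : TT) : ℤ :=
  (t.1).1 * ((t.2.1).2.1*((t.2.2.1).2.2.1*(t.2.2.2).2.2.2 - (t.2.2.1).2.2.2*(t.2.2.2).2.2.1) - (t.2.1).2.2.1*((t.2.2.1).2.1*(t.2.2.2).2.2.2 - (t.2.2.1).2.2.2*(t.2.2.2).2.1) + (t.2.1).2.2.2*((t.2.2.1).2.1*(t.2.2.2).2.2.1 - (t.2.2.1).2.2.1*(t.2.2.2).2.1)) - (t.1).2.1 * ((t.2.1).1*((t.2.2.1).2.2.1*(t.2.2.2).2.2.2 - (t.2.2.1).2.2.2*(t.2.2.2).2.2.1) - (t.2.1).2.2.1*((t.2.2.1).1*(t.2.2.2).2.2.2 - (t.2.2.1).2.2.2*(t.2.2.2).1) + (t.2.1).2.2.2*((t.2.2.1).1*(t.2.2.2).2.2.1 - (t.2.2.1).2.2.1*(t.2.2.2).1)) + (t.1).2.2.1 * ((t.2.1).1*((t.2.2.1).2.1*(t.2.2.2).2.2.2 - (t.2.2.1).2.2.2*(t.2.2.2).2.1) - (t.2.1).2.1*((t.2.2.1).1*(t.2.2.2).2.2.2 - (t.2.2.1).2.2.2*(t.2.2.2).1)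 + (t.2.1).2.2.2*((t.2.2.1).1*(t.2.2.2).2.1 - (t.2.2.1).2.1*(t.2.2.2).1)) - (t.1).2.2.2 * ((t.2.1).1*((t.2.2.1).2.1*(t.2.2.2).2.2.1 - (t.2.2.1).2.2.1*(t.2.2.2).2.1) - (t.2.1).2.1*((t.2.2.1).1*(t.2.2.2).2.2.1 - (t.2.2.1).2.2.1*(t.2.2.2).1) + (t.2.1).2.2.1*((t.2.2.1).1*(t.2.2.2).2.1 - (t.2.2.1).2.1*(t.2.2.2).1))

def AQ : Matrix (Fin 4) (Fin 4) ℤ := !![4,4,2,2; 4,8,4,4; 2,4,4,2; 2,4,2,4]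

abbrev GramT (t : TT) : Prop :=
  Bt t.1 t.1 = 2 ∧
  Bt t.1 t.2.1 = -1 ∧
  Bt t.1 t.2.2.1 = 0 ∧
  Bt t.1 t.2.2.2 = 0 ∧
  Bt t.2.1 t.1 = -1 ∧
  Bt t.2.1 t.2.1 = 2 ∧
  Bt t.2.1 t.2.2.1 = -1 ∧
  Bt t.2.1 t.2.2.2 = -1 ∧
  Bt t.2.2.1 t.1 = 0 ∧
  Bt t.2.2.1 t.2.1 = -1 ∧
  Bt t.2.2.1 t.2.2.1 = 2 ∧
  Bt t.2.2.1 t.2.2.2 = 0 ∧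
  Bt t.2.2.2 t.1 = 0 ∧
  Bt t.2.2.2 t.2.1 = -1 ∧
  Bt t.2.2.2 t.2.2.1 = 0 ∧
  Bt t.2.2.2 t.2.2.2 = 2

abbrev ModT (t : TT) : Prop :=
  (4*(t.1).1 + 4*(t.2.1).1 + 2*(t.2.2.1).1 + 2*(t.2.2.2).1 - 4) % 4 = 0 ∧
  (4*(t.1).2.1 + 4*(t.2.1).2.1 + 2*(t.2.2.1).2.1 + 2*(t.2.2.2).2.1 - 4) % 4 = 0 ∧
  (4*(t.1).2.2.1 + 4*(t.2.1).2.2.1 + 2*(t.2.2.1).2.2.1 + 2*(t.2.2.2).2.2.1 - 2) % 4 = 0 ∧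
  (4*(t.1).2.2.2 + 4*(t.2.1).2.2.2 + 2*(t.2.2.1).2.2.2 + 2*(t.2.2.2).2.2.2 - 2) % 4 = 0 ∧
  (4*(t.1).1 + 8*(t.2.1).1 + 4*(t.2.2.1).1 + 4*(t.2.2.2).1 - 4) % 4 = 0 ∧
  (4*(t.1).2.1 + 8*(t.2.1).2.1 + 4*(t.2.2.1).2.1 + 4*(t.2.2.2).2.1 - 8) % 4 = 0 ∧
  (4*(t.1).2.2.1 + 8*(t.2.1).2.2.1 + 4*(t.2.2.1).2.2.1 + 4*(t.2.2.2).2.2.1 - 4) % 4 = 0 ∧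
  (4*(t.1).2.2.2 + 8*(t.2.1).2.2.2 + 4*(t.2.2.1).2.2.2 + 4*(t.2.2.2).2.2.2 - 4) % 4 = 0 ∧
  (2*(t.1).1 + 4*(t.2.1).1 + 4*(t.2.2.1).1 + 2*(t.2.2.2).1 - 2) % 4 = 0 ∧
  (2*(t.1).2.1 + 4*(t.2.1).2.1 + 4*(t.2.2.1).2.1 + 2*(t.2.2.2).2.1 - 4) % 4 = 0 ∧
  (2*(t.1).2.2.1 + 4*(t.2.1).2.2.1 + 4*(t.2.2.1).2.2.1 + 2*(t.2.2.2).2.2.1 - 4) % 4 = 0 ∧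
  (2*(t.1).2.2.2 + 4*(t.2.1).2.2.2 + 4*(t.2.2.1).2.2.2 + 2*(t.2.2.2).2.2.2 - 2) % 4 = 0 ∧
  (2*(t.1).1 + 4*(t.2.1).1 + 2*(t.2.2.1).1 + 4*(t.2.2.2).1 - 2) % 4 = 0 ∧
  (2*(t.1).2.1 + 4*(t.2.1).2.1 + 2*(t.2.2.1).2.1 + 4*(t.2.2.2).2.1 - 4) % 4 = 0 ∧
  (2*(t.1).2.2.1 + 4*(t.2.1).2.2.1 + 2*(t.2.2.1).2.2.1 + 4*(t.2.2.2).2.2.1 - 2) % 4 = 0 ∧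
  (2*(t.1).2.2.2 + 4*(t.2.1).2.2.2 + 2*(t.2.2.1).2.2.2 + 4*(t.2.2.2).2.2.2 - 4) % 4 = 0

def rootsT : List Rt :=
 [(-1, -2, -1, -1),
  (-1, -1, -1, -1),
  (-1, -1, -1, 0),
  (-1, -1, 0, -1),
  (-1, -1, 0, 0),
  (-1, 0, 0, 0),
  (0, -1, -1, -1),
  (0, -1, -1, 0),
  (0, -1, 0, -1),
  (0, -1, 0, 0),
  (0, 0, -1, 0),
  (0, 0, 0, -1),
  (0, 0, 0, 1),
  (0, 0, 1, 0),
  (0, 1, 0, 0),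
  (0, 1, 0, 1),
  (0, 1, 1, 0),
  (0, 1, 1, 1),
  (1, 0, 0, 0),
  (1, 1, 0, 0),
  (1, 1, 0, 1),
  (1, 1, 1, 0),
  (1, 1, 1, 1),
  (1, 2, 1, 1)]

set_option maxHeartbeats 2000000 in
def LX : List TT :=
 [((-1, -2, -1, -1), (0, 1, 0, 0), (0, 0, 0, 1), (0, 0, 1, 0)),
  ((-1, -2, -1, -1), (0, 1, 1, 1), (0, 0, 0, -1), (0, 0, -1, 0)),
  ((-1, -2, -1, -1), (1, 1, 0, 1), (0, 0, 0, -1), (0, 0, 1, 0)),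
  ((-1, -2, -1, -1), (1, 1, 1, 0), (0, 0, 0, 1), (0, 0, -1, 0)),
  ((-1, -1, -1, -1), (0, 0, 0, 1), (0, -1, 0, -1), (0, 1, 1, 0)),
  ((-1, -1, -1, -1), (0, 0, 1, 0), (0, 1, 0, 1), (0, -1, -1, 0)),
  ((-1, -1, -1, -1), (1, 0, 0, 0), (0, 1, 0, 1), (0, 1, 1, 0)),
  ((-1, -1, -1, -1), (1, 2, 1, 1), (0, -1, 0, -1), (0, -1, -1, 0)),
  ((-1, -1, -1, 0), (0, -1, 0, -1), (0, 1, 0, 0), (0, 1, 1, 1)),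
  ((-1, -1, -1, 0), (0, 1, 1, 0), (0, -1, 0, 0), (0, -1, -1, -1)),
  ((-1, -1, -1, 0), (1, 1, 0, 0), (0, -1, 0, 0), (0, 1, 1, 1)),
  ((-1, -1, -1, 0), (1, 1, 1, 1), (0, 1, 0, 0), (0, -1, -1, -1)),
  ((-1, -1, 0, -1), (0, -1, -1, 0), (0, 1, 1, 1), (0, 1, 0, 0)),
  ((-1, -1, 0, -1), (0, 1, 0, 1), (0, -1, -1, -1), (0, -1, 0, 0)),
  ((-1, -1, 0, -1), (1, 1, 0, 0), (0, 1, 1, 1), (0, -1, 0, 0)),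
  ((-1, -1, 0, -1), (1, 1, 1, 1), (0, -1, -1, -1), (0, 1, 0, 0)),
  ((-1, -1, 0, 0), (0, 0, -1, 0), (0, 1, 1, 0), (0, -1, 0, -1)),
  ((-1, -1, 0, 0), (0, 0, 0, -1), (0, -1, -1, 0), (0, 1, 0, 1)),
  ((-1, -1, 0, 0), (1, 0, 0, 0), (0, 1, 1, 0), (0, 1, 0, 1)),
  ((-1, -1, 0, 0), (1, 2, 1, 1), (0, -1, -1, 0), (0, -1, 0, -1)),
  ((-1, 0, 0, 0), (0, -1, -1, -1), (0, 0, 1, 0), (0, 0, 0, 1)),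
  ((-1, 0, 0, 0), (0, -1, 0, 0), (0, 0, -1, 0), (0, 0, 0, -1)),
  ((-1, 0, 0, 0), (1, 1, 0, 1), (0, 0, 1, 0), (0, 0, 0, -1)),
  ((-1, 0, 0, 0), (1, 1, 1, 0), (0, 0, -1, 0), (0, 0, 0, 1)),
  ((0, -1, -1, -1), (-1, -1, 0, 0), (1, 1, 0, 1), (1, 1, 1, 0)),
  ((0, -1, -1, -1), (0, 1, 0, 1), (-1, -1, 0, -1), (1, 1, 1, 0)),
  ((0, -1, -1, -1), (0, 1, 1, 0), (1, 1, 0, 1), (-1, -1, -1, 0)),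
  ((0, -1, -1, -1), (1, 1, 1, 1), (-1, -1, 0, -1), (-1, -1, -1, 0)),
  ((0, -1, -1, 0), (-1, 0, 0, 0), (1, 1, 0, 0), (1, 1, 1, 1)),
  ((0, -1, -1, 0), (0, 0, 0, -1), (-1, -1, 0, 0), (1, 1, 1, 1)),
  ((0, -1, -1, 0), (0, 0, 1, 0), (1, 1, 0, 0), (-1, -1, -1, -1)),
  ((0, -1, -1, 0), (1, 2, 1, 1), (-1, -1, 0, 0), (-1, -1, -1, -1)),
  ((0, -1, 0, -1), (-1, 0, 0, 0), (1, 1, 1, 1), (1, 1, 0, 0)),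
  ((0, -1, 0, -1), (0, 0, -1, 0), (1, 1, 1, 1), (-1, -1, 0, 0)),
  ((0, -1, 0, -1), (0, 0, 0, 1), (-1, -1, -1, -1), (1, 1, 0, 0)),
  ((0, -1, 0, -1), (1, 2, 1, 1), (-1, -1, -1, -1), (-1, -1, 0, 0)),
  ((0, -1, 0, 0), (-1, -1, -1, -1), (1, 1, 1, 0), (1, 1, 0, 1)),
  ((0, -1, 0, 0), (0, 1, 0, 1), (1, 1, 1, 0), (-1, -1, 0, -1)),
  ((0, -1, 0, 0), (0, 1, 1, 0), (-1, -1, -1, 0), (1, 1, 0, 1)),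
  ((0, -1, 0, 0), (1, 1, 0, 0), (-1, -1, -1, 0), (-1, -1, 0, -1)),
  ((0, 0, -1, 0), (-1, -1, 0, -1), (1, 0, 0, 0), (1, 2, 1, 1)),
  ((0, 0, -1, 0), (0, -1, 0, 0), (-1, 0, 0, 0), (1, 2, 1, 1)),
  ((0, 0, -1, 0), (0, 1, 1, 1), (1, 0, 0, 0), (-1, -2, -1, -1)),
  ((0, 0, -1, 0), (1, 1, 1, 0), (-1, 0, 0, 0), (-1, -2, -1, -1)),
  ((0, 0, 0, -1), (-1, -1, -1, 0), (1, 2, 1, 1), (1, 0, 0, 0)),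
  ((0, 0, 0, -1), (0, -1, 0, 0), (1, 2, 1, 1), (-1, 0, 0, 0)),
  ((0, 0, 0, -1), (0, 1, 1, 1), (-1, -2, -1, -1), (1, 0, 0, 0)),
  ((0, 0, 0, -1), (1, 1, 0, 1), (-1, -2, -1, -1), (-1, 0, 0, 0)),
  ((0, 0, 0, 1), (-1, -1, 0, -1), (1, 2, 1, 1), (1, 0, 0, 0)),
  ((0, 0, 0, 1), (0, -1, -1, -1), (1, 2, 1, 1), (-1, 0, 0, 0)),
  ((0, 0, 0, 1), (0, 1, 0, 0), (-1, -2, -1, -1), (1, 0, 0, 0)),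
  ((0, 0, 0, 1), (1, 1, 1, 0), (-1, -2, -1, -1), (-1, 0, 0, 0)),
  ((0, 0, 1, 0), (-1, -1, -1, 0), (1, 0, 0, 0), (1, 2, 1, 1)),
  ((0, 0, 1, 0), (0, -1, -1, -1), (-1, 0, 0, 0), (1, 2, 1, 1)),
  ((0, 0, 1, 0), (0, 1, 0, 0), (1, 0, 0, 0), (-1, -2, -1, -1)),
  ((0, 0, 1, 0), (1, 1, 0, 1), (-1, 0, 0, 0), (-1, -2, -1, -1)),
  ((0, 1, 0, 0), (-1, -1, 0, 0), (1, 1, 1, 0), (1, 1, 0, 1)),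
  ((0, 1, 0, 0), (0, -1, -1, 0), (1, 1, 1, 0), (-1, -1, 0, -1)),
  ((0, 1, 0, 0), (0, -1, 0, -1), (-1, -1, -1, 0), (1, 1, 0, 1)),
  ((0, 1, 0, 0), (1, 1, 1, 1), (-1, -1, -1, 0), (-1, -1, 0, -1)),
  ((0, 1, 0, 1), (-1, -2, -1, -1), (1, 1, 1, 1), (1, 1, 0, 0)),
  ((0, 1, 0, 1), (0, 0, 0, -1), (1, 1, 1, 1), (-1, -1, 0, 0)),
  ((0, 1, 0, 1), (0, 0, 1, 0), (-1, -1, -1, -1), (1, 1, 0, 0)),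
  ((0, 1, 0, 1), (1, 0, 0, 0), (-1, -1, -1, -1), (-1, -1, 0, 0)),
  ((0, 1, 1, 0), (-1, -2, -1, -1), (1, 1, 0, 0), (1, 1, 1, 1)),
  ((0, 1, 1, 0), (0, 0, -1, 0), (-1, -1, 0, 0), (1, 1, 1, 1)),
  ((0, 1, 1, 0), (0, 0, 0, 1), (1, 1, 0, 0), (-1, -1, -1, -1)),
  ((0, 1, 1, 0), (1, 0, 0, 0), (-1, -1, 0, 0), (-1, -1, -1, -1)),
  ((0, 1, 1, 1), (-1, -1, -1, -1), (1, 1, 0, 1), (1, 1, 1, 0)),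
  ((0, 1, 1, 1), (0, -1, -1, 0), (-1, -1, 0, -1), (1, 1, 1, 0)),
  ((0, 1, 1, 1), (0, -1, 0, -1), (1, 1, 0, 1), (-1, -1, -1, 0)),
  ((0, 1, 1, 1), (1, 1, 0, 0), (-1, -1, 0, -1), (-1, -1, -1, 0)),
  ((1, 0, 0, 0), (-1, -1, -1, 0), (0, 0, 1, 0), (0, 0, 0, -1)),
  ((1, 0, 0, 0), (-1, -1, 0, -1), (0, 0, -1, 0), (0, 0, 0, 1)),
  ((1, 0, 0, 0), (0, 1, 0, 0), (0, 0, 1, 0), (0, 0, 0, 1)),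
  ((1, 0, 0, 0), (0, 1, 1, 1), (0, 0, -1, 0), (0, 0, 0, -1)),
  ((1, 1, 0, 0), (-1, -2, -1, -1), (0, 1, 1, 0), (0, 1, 0, 1)),
  ((1, 1, 0, 0), (-1, 0, 0, 0), (0, -1, -1, 0), (0, -1, 0, -1)),
  ((1, 1, 0, 0), (0, 0, 0, 1), (0, 1, 1, 0), (0, -1, 0, -1)),
  ((1, 1, 0, 0), (0, 0, 1, 0), (0, -1, -1, 0), (0, 1, 0, 1)),
  ((1, 1, 0, 1), (-1, -1, -1, -1), (0, 1, 1, 1), (0, -1, 0, 0)),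
  ((1, 1, 0, 1), (-1, -1, 0, 0), (0, -1, -1, -1), (0, 1, 0, 0)),
  ((1, 1, 0, 1), (0, -1, 0, -1), (0, 1, 1, 1), (0, 1, 0, 0)),
  ((1, 1, 0, 1), (0, 1, 1, 0), (0, -1, -1, -1), (0, -1, 0, 0)),
  ((1, 1, 1, 0), (-1, -1, -1, -1), (0, -1, 0, 0), (0, 1, 1, 1)),
  ((1, 1, 1, 0), (-1, -1, 0, 0), (0, 1, 0, 0), (0, -1, -1, -1)),
  ((1, 1, 1, 0), (0, -1, -1, 0), (0, 1, 0, 0), (0, 1, 1, 1)),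
  ((1, 1, 1, 0), (0, 1, 0, 1), (0, -1, 0, 0), (0, -1, -1, -1)),
  ((1, 1, 1, 1), (-1, -2, -1, -1), (0, 1, 0, 1), (0, 1, 1, 0)),
  ((1, 1, 1, 1), (-1, 0, 0, 0), (0, -1, 0, -1), (0, -1, -1, 0)),
  ((1, 1, 1, 1), (0, 0, -1, 0), (0, -1, 0, -1), (0, 1, 1, 0)),
  ((1, 1, 1, 1), (0, 0, 0, -1), (0, 1, 0, 1), (0, -1, -1, 0)),
  ((1, 2, 1, 1), (-1, -1, -1, 0), (0, 0, 0, -1), (0, 0, 1, 0)),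
  ((1, 2, 1, 1), (-1, -1, 0, -1), (0, 0, 0, 1), (0, 0, -1, 0)),
  ((1, 2, 1, 1), (0, -1, -1, -1), (0, 0, 0, 1), (0, 0, 1, 0)),
  ((1, 2, 1, 1), (0, -1, 0, 0), (0, 0, 0, -1), (0, 0, -1, 0))]

def toVec (r : Rt) : Fin 4 → ℤ := ![r.1, r.2.1, r.2.2.1, r.2.2.2]

def toM (t : TT) : Matrix (Fin 4) (Fin 4) ℤ :=
  Matrix.of ![toVec t.1, toVec t.2.1, toVec t.2.2.1, toVec t.2.2.2]

def tupM (M : Matrix (Fin 4) (Fin 4) ℤ) : TT :=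
  ((M 0 0, M 0 1, M 0 2, M 0 3), (M 1 0, M 1 1, M 1 2, M 1 3),
   (M 2 0, M 2 1, M 2 2, M 2 3), (M 3 0, M 3 1, M 3 2, M 3 3))

lemma toM_tupM (M : Matrix (Fin 4) (Fin 4) ℤ) : toM (tupM M) = M := by
  ext i j
  fin_cases i <;> fin_cases j <;> rfl

lemma tupM_toM (t : TT) : tupM (toM t) = t := by
  obtain ⟨⟨a,b,c,d⟩,⟨e,f,g,h⟩,⟨i,j,k,l⟩,⟨m,n,o,p⟩⟩ := t
  rfl

lemma det4_eq (M : Matrix (Fin 4) (Fin 4) ℤ) : M.det = det4 M := by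
  have h1 : (Fin.succ 2 : Fin 4) = 3 := rfl
  have h2 : (Fin.succAbove 2 2 : Fin 4) = 3 := rfl
  have h3 : (Fin.succAbove 1 2 : Fin 4) = 3 := rfl
  have h4 : (Fin.castSucc 2 : Fin 4) = 2 := rfl
  have h5 : (Fin.succAbove 3 2 : Fin 4) = 2 := rfl
  simp [Matrix.det_succ_row_zero, Fin.sum_univ_succ, det4, h1, h2, h3, h4, h5]
  ring

lemma entry_eq (M : Matrix (Fin 4) (Fin 4) ℤ) (i j : Fin 4) :
    (M * QD4 * Mᵀ) i j = Bf (M i) (M j) := by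
  simp [Matrix.mul_apply, Matrix.transpose_apply, Fin.sum_univ_four, QD4, Bf]
  ring

set_option maxHeartbeats 4000000 in
lemma rootsComplete : ∀ a b c d : Fin 5, Bt ((((a : ℕ) : ℤ) - 2), (((b : ℕ) : ℤ) - 2), (((c : ℕ) : ℤ) - 2), (((d : ℕ) : ℤ) - 2)) ((((a : ℕ) : ℤ) - 2), (((b : ℕ) : ℤ) - 2), (((c : ℕ) : ℤ) - 2), (((d : ℕ) : ℤ) - 2)) = 2 → ((((a : ℕ) : ℤ) - 2), (((b : ℕ) : ℤ) - 2), (((c : ℕ) : ℤ) - 2), (((d : ℕ) : ℤ) - 2)) ∈ rootsT := by decide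

set_option synthInstance.maxHeartbeats 2000000 in
set_option synthInstance.maxSize 10000 in
set_option maxHeartbeats 10000000 in
lemma mainSearch : ∀ r0 ∈ rootsT, ∀ r1 ∈ rootsT, Bt r0 r1 = -1 →
    ∀ r2 ∈ rootsT, Bt r0 r2 = 0 → Bt r1 r2 = -1 →
    ∀ r3 ∈ rootsT, Bt r0 r3 = 0 → Bt r1 r3 = -1 → Bt r2 r3 = 0 →
    detT (r0, r1, r2, r3) = 1 → ModT (r0, r1, r2, r3) → (r0, r1, r2, r3) ∈ LX := by decide

set_option maxHeartbeats 4000000 in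
lemma memLT : ∀ t ∈ LX, GramT t ∧ detT t = 1 ∧ ModT t := by decide

lemma rowMem (x0 x1 x2 x3 : ℤ) (h : Bt (x0,x1,x2,x3) (x0,x1,x2,x3) = 2) :
    ((x0,x1,x2,x3) : Rt) ∈ rootsT := by
  have h' : 2*(x0*x0 + x1*x1 + x2*x2 + x3*x3) - x0*x1 - x1*x0 - x1*x2 - x2*x1 - x1*x3 - x3*x1 = 2 := h
  have hq : (2*x0 - x1)^2 + x1^2 + (2*x2 - x1)^2 + (2*x3 - x1)^2 = 4 := by linear_combination 2*h'
  have e1 : (2*x0 - x1)^2 ≤ 4 := by nlinarith [sq_nonneg x1, sq_nonneg (2*x2 - x1), sq_nonneg (2*x3 - x1)]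
  have e2 : x1^2 ≤ 4 := by nlinarith [sq_nonneg (2*x0 - x1), sq_nonneg (2*x2 - x1), sq_nonneg (2*x3 - x1)]
  have e3 : (2*x2 - x1)^2 ≤ 4 := by nlinarith [sq_nonneg (2*x0 - x1), sq_nonneg x1, sq_nonneg (2*x3 - x1)]
  have e4 : (2*x3 - x1)^2 ≤ 4 := by nlinarith [sq_nonneg (2*x0 - x1), sq_nonneg x1, sq_nonneg (2*x2 - x1)]
  have l1a : 2*x0 - x1 ≤ 2 := by nlinarith [sq_nonneg (2*x0 - x1 - 2)]
  have l1b : -2 ≤ 2*x0 - x1 := by nlinarith [sq_nonneg (2*x0 - x1 + 2)]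
  have l2a : x1 ≤ 2 := by nlinarith [sq_nonneg (x1 - 2)]
  have l2b : -2 ≤ x1 := by nlinarith [sq_nonneg (x1 + 2)]
  have l3a : 2*x2 - x1 ≤ 2 := by nlinarith [sq_nonneg (2*x2 - x1 - 2)]
  have l3b : -2 ≤ 2*x2 - x1 := by nlinarith [sq_nonneg (2*x2 - x1 + 2)]
  have l4a : 2*x3 - x1 ≤ 2 := by nlinarith [sq_nonneg (2*x3 - x1 - 2)]
  have l4b : -2 ≤ 2*x3 - x1 := by nlinarith [sq_nonneg (2*x3 - x1 + 2)]
  have b0 : -2 ≤ x0 ∧ x0 ≤ 2 := by omega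
  have b2 : -2 ≤ x2 ∧ x2 ≤ 2 := by omega
  have b3 : -2 ≤ x3 ∧ x3 ≤ 2 := by omega
  have key := rootsComplete ⟨(x0+2).toNat, by omega⟩ ⟨(x1+2).toNat, by omega⟩
      ⟨(x2+2).toNat, by omega⟩ ⟨(x3+2).toNat, by omega⟩
  have key' : (Bt ((((x0+2).toNat : ℤ)) - 2, (((x1+2).toNat : ℤ)) - 2, (((x2+2).toNat : ℤ)) - 2, (((x3+2).toNat : ℤ)) - 2)
        ((((x0+2).toNat : ℤ)) - 2, (((x1+2).toNat : ℤ)) - 2, (((x2+2).toNat : ℤ)) - 2, (((x3+2).toNat : ℤ)) - 2) = 2 →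
      ((((x0+2).toNat : ℤ)) - 2, (((x1+2).toNat : ℤ)) - 2, (((x2+2).toNat : ℤ)) - 2, (((x3+2).toNat : ℤ)) - 2) ∈ rootsT) := key
  have e0' : (((x0+2).toNat : ℤ)) - 2 = x0 := by omega
  have e1' : (((x1+2).toNat : ℤ)) - 2 = x1 := by omega
  have e2' : (((x2+2).toNat : ℤ)) - 2 = x2 := by omega
  have e3' : (((x3+2).toNat : ℤ)) - 2 = x3 := by omega
  rw [e0', e1', e2', e3'] at key'
  exact key' h

lemma gram_of (t : TT) (hG : GramT t) : toM t * QD4 * (toM t)ᵀ = QD4 := by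
  obtain ⟨g00, g01, g02, g03, g10, g11, g12, g13, g20, g21, g22, g23, g30, g31, g32, g33⟩ := hG
  ext i j
  rw [entry_eq]
  fin_cases i <;> fin_cases j
  exacts [g00, g01, g02, g03, g10, g11, g12, g13, g20, g21, g22, g23, g30, g31, g32, g33]

lemma rowVecMulAux (A B : Matrix (Fin 4) (Fin 4) ℚ) (i : Fin 4) :
    Matrix.vecMul (A i) B = (A * B) i := by
  funext j
  simp [Matrix.vecMul, dotProduct, Matrix.mul_apply]

lemma smul_one_mapq :
    (((4:ℤ) • (1 : Matrix (Fin 4) (Fin 4) ℤ)).map ((↑) : ℤ → ℚ)) = (4:ℚ) • 1 := by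
  have h : ∀ i j : Fin 4, ((4:ℤ) • (1 : Matrix (Fin 4) (Fin 4) ℤ)) i j = if i = j then 4 else 0 := by
    decide
  ext i j
  rw [Matrix.map_apply, h]
  by_cases hij : i = j <;> simp [hij, Matrix.smul_apply, Matrix.one_apply]

lemma AQ_mul_Q : AQ * QD4 = (4:ℤ) • 1 := by decide

lemma Q_mul_AQ : QD4 * AQ = (4:ℤ) • 1 := by decide

lemma vecMul_smulM (x : Fin 4 → ℚ) (c : ℚ) (B : Matrix (Fin 4) (Fin 4) ℚ) :
    Matrix.vecMul x (c • B) = c • Matrix.vecMul x B := by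
  funext j
  simp only [Matrix.vecMul, dotProduct, Matrix.smul_apply, Pi.smul_apply, smul_eq_mul,
    Finset.mul_sum]
  exact Finset.sum_congr rfl fun k _ => by ring

lemma dir1 (M : Matrix (Fin 4) (Fin 4) ℤ)
    (h3 : ∀ x : Fin 4 → ℚ, IsIntVec (Matrix.vecMul x (QD4.map ((↑) : ℤ → ℚ))) →
      IsIntVec (Matrix.vecMul x (M.map ((↑) : ℤ → ℚ)) - x)) :
    ∀ i j, (AQ * M - AQ) i j % 4 = 0 := by
  intro i j
  set x : Fin 4 → ℚ := (4:ℚ)⁻¹ • ((AQ.map ((↑) : ℤ → ℚ)) i) with hx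
  have hAQQ : (AQ.map ((↑) : ℤ → ℚ)) * (QD4.map ((↑) : ℤ → ℚ)) = (4:ℚ) • 1 := by
    rw [← mapq_mul, AQ_mul_Q, smul_one_mapq]
  have h1 : Matrix.vecMul x (QD4.map ((↑) : ℤ → ℚ))
      = (4:ℚ)⁻¹ • (((4:ℚ) • (1 : Matrix (Fin 4) (Fin 4) ℚ)) i) := by
    rw [hx, Matrix.smul_vecMul, rowVecMulAux, hAQQ]
  have hint : IsIntVec (Matrix.vecMul x (QD4.map ((↑) : ℤ → ℚ))) := by
    rw [h1]; intro k
    refine ⟨if i = k then 1 else 0, ?_⟩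
    by_cases h : i = k <;> simp [Matrix.smul_apply, Matrix.one_apply, h]
  have h2 := h3 x hint
  have h4 : Matrix.vecMul x (M.map ((↑) : ℤ → ℚ)) - x
      = (4:ℚ)⁻¹ • (((AQ * M - AQ).map ((↑) : ℤ → ℚ)) i) := by
    rw [hx, Matrix.smul_vecMul, rowVecMulAux, ← mapq_mul]
    funext k
    simp only [Pi.sub_apply, Pi.smul_apply, smul_eq_mul, Matrix.map_apply, Matrix.sub_apply]
    push_cast
    ring
  rw [h4] at h2
  obtain ⟨cc, hcc⟩ := h2 j
  simp only [Pi.smul_apply, smul_eq_mul, Matrix.map_apply] at hcc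
  have hzq : (((AQ * M - AQ) i j : ℤ) : ℚ) = 4 * cc := by
    field_simp at hcc
    rw [Matrix.sub_apply]
    push_cast [Matrix.sub_apply] at hcc ⊢
    linarith
  have hz : (AQ * M - AQ) i j = 4 * cc := by exact_mod_cast hzq
  omega

lemma dir2 (M : Matrix (Fin 4) (Fin 4) ℤ) (hmod : ∀ i j, (AQ * M - AQ) i j % 4 = 0) :
    ∀ x : Fin 4 → ℚ, IsIntVec (Matrix.vecMul x (QD4.map ((↑) : ℤ → ℚ))) →
      IsIntVec (Matrix.vecMul x (M.map ((↑) : ℤ → ℚ)) - x) := by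
  intro x hx
  set Z : Matrix (Fin 4) (Fin 4) ℤ := Matrix.of fun i j => (AQ * M - AQ) i j / 4 with hZdef
  have hZ : AQ * M - AQ = (4:ℤ) • Z := by
    ext i j
    have := hmod i j
    simp only [hZdef, Matrix.smul_apply, Matrix.of_apply, smul_eq_mul]
    omega
  have hQA : (QD4.map ((↑) : ℤ → ℚ)) * (AQ.map ((↑) : ℤ → ℚ)) = (4:ℚ) • 1 := by
    rw [← mapq_mul, Q_mul_AQ, smul_one_mapq]
  have hyA : Matrix.vecMul (Matrix.vecMul x (QD4.map ((↑) : ℤ → ℚ))) (AQ.map ((↑) : ℤ → ℚ))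
      = (4:ℚ) • x := by
    rw [Matrix.vecMul_vecMul, hQA, vecMul_smulM, Matrix.vecMul_one]
  have e1 : ((4:ℤ) • Z).map ((↑) : ℤ → ℚ) = (4:ℚ) • Z.map ((↑) : ℤ → ℚ) := by
    ext i j
    simp only [Matrix.map_apply, Matrix.smul_apply, smul_eq_mul]
    push_cast
    ring
  have e2 : (AQ.map ((↑) : ℤ → ℚ)) * (M.map ((↑) : ℤ → ℚ)) - (AQ.map ((↑) : ℤ → ℚ))
      = ((AQ * M - AQ).map ((↑) : ℤ → ℚ)) := by
    rw [← mapq_mul]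
    ext i j
    simp [Matrix.map_apply, Matrix.sub_apply]
  have hkey : (4:ℚ) • (Matrix.vecMul x (M.map ((↑) : ℤ → ℚ)) - x)
      = (4:ℚ) • (Matrix.vecMul (Matrix.vecMul x (QD4.map ((↑) : ℤ → ℚ))) (Z.map ((↑) : ℤ → ℚ))) := by
    calc (4:ℚ) • (Matrix.vecMul x (M.map ((↑) : ℤ → ℚ)) - x)
        = (4:ℚ) • Matrix.vecMul x (M.map ((↑) : ℤ → ℚ)) - (4:ℚ) • x := smul_sub _ _ _
      _ = Matrix.vecMul ((4:ℚ) • x) (M.map ((↑) : ℤ → ℚ))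
            - Matrix.vecMul (Matrix.vecMul x (QD4.map ((↑) : ℤ → ℚ))) (AQ.map ((↑) : ℤ → ℚ)) := by
          rw [Matrix.smul_vecMul, hyA]
      _ = Matrix.vecMul (Matrix.vecMul (Matrix.vecMul x (QD4.map ((↑) : ℤ → ℚ))) (AQ.map ((↑) : ℤ → ℚ))) (M.map ((↑) : ℤ → ℚ))
            - Matrix.vecMul (Matrix.vecMul x (QD4.map ((↑) : ℤ → ℚ))) (AQ.map ((↑) : ℤ → ℚ)) := by
          rw [hyA]
      _ = Matrix.vecMul (Matrix.vecMul x (QD4.map ((↑) : ℤ → ℚ)))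
            ((AQ.map ((↑) : ℤ → ℚ)) * (M.map ((↑) : ℤ → ℚ)) - (AQ.map ((↑) : ℤ → ℚ))) := by
          rw [Matrix.vecMul_sub, Matrix.vecMul_vecMul]
      _ = Matrix.vecMul (Matrix.vecMul x (QD4.map ((↑) : ℤ → ℚ))) (((4:ℤ) • Z).map ((↑) : ℤ → ℚ)) := by
          rw [e2, hZ]
      _ = (4:ℚ) • Matrix.vecMul (Matrix.vecMul x (QD4.map ((↑) : ℤ → ℚ))) (Z.map ((↑) : ℤ → ℚ)) := by
          rw [e1, vecMul_smulM]
  have heq : Matrix.vecMul x (M.map ((↑) : ℤ → ℚ)) - x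
      = Matrix.vecMul (Matrix.vecMul x (QD4.map ((↑) : ℤ → ℚ))) (Z.map ((↑) : ℤ → ℚ)) :=
    smul_right_injective (Fin 4 → ℚ) (by norm_num : (4:ℚ) ≠ 0) hkey
  rw [heq]
  exact intvec_vecMul hx Z

set_option maxHeartbeats 4000000 in
lemma mod_bridge1 (t : TT) (h : ModT t) : ∀ i j, (AQ * toM t - AQ) i j % 4 = 0 := by
  obtain ⟨⟨a1,a2,a3,a4⟩,⟨b1,b2,b3,b4⟩,⟨c1,c2,c3,c4⟩,⟨d1,d2,d3,d4⟩⟩ := t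
  obtain ⟨h00, h01, h02, h03, h10, h11, h12, h13, h20, h21, h22, h23, h30, h31, h32, h33⟩ := h
  have H00 : (4*a1 + 4*b1 + 2*c1 + 2*d1 - 4) % 4 = 0 := h00
  have H01 : (4*a2 + 4*b2 + 2*c2 + 2*d2 - 4) % 4 = 0 := h01
  have H02 : (4*a3 + 4*b3 + 2*c3 + 2*d3 - 2) % 4 = 0 := h02
  have H03 : (4*a4 + 4*b4 + 2*c4 + 2*d4 - 2) % 4 = 0 := h03
  have H10 : (4*a1 + 8*b1 + 4*c1 + 4*d1 - 4) % 4 = 0 := h10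
  have H11 : (4*a2 + 8*b2 + 4*c2 + 4*d2 - 8) % 4 = 0 := h11
  have H12 : (4*a3 + 8*b3 + 4*c3 + 4*d3 - 4) % 4 = 0 := h12
  have H13 : (4*a4 + 8*b4 + 4*c4 + 4*d4 - 4) % 4 = 0 := h13
  have H20 : (2*a1 + 4*b1 + 4*c1 + 2*d1 - 2) % 4 = 0 := h20
  have H21 : (2*a2 + 4*b2 + 4*c2 + 2*d2 - 4) % 4 = 0 := h21
  have H22 : (2*a3 + 4*b3 + 4*c3 + 2*d3 - 4) % 4 = 0 := h22
  have H23 : (2*a4 + 4*b4 + 4*c4 + 2*d4 - 2) % 4 = 0 := h23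
  have H30 : (2*a1 + 4*b1 + 2*c1 + 4*d1 - 2) % 4 = 0 := h30
  have H31 : (2*a2 + 4*b2 + 2*c2 + 4*d2 - 4) % 4 = 0 := h31
  have H32 : (2*a3 + 4*b3 + 2*c3 + 4*d3 - 2) % 4 = 0 := h32
  have H33 : (2*a4 + 4*b4 + 2*c4 + 4*d4 - 4) % 4 = 0 := h33
  intro i j
  fin_cases i <;> fin_cases j <;>
    simp [toM, toVec, AQ, Matrix.mul_apply, Matrix.sub_apply, Fin.sum_univ_four, Matrix.vecHead, Matrix.vecTail] <;>
    omega

set_option maxHeartbeats 4000000 in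
lemma mod_bridge2 (t : TT) (h : ∀ i j, (AQ * toM t - AQ) i j % 4 = 0) : ModT t := by
  obtain ⟨⟨a1,a2,a3,a4⟩,⟨b1,b2,b3,b4⟩,⟨c1,c2,c3,c4⟩,⟨d1,d2,d3,d4⟩⟩ := t
  have h00 := h 0 0
  have h01 := h 0 1
  have h02 := h 0 2
  have h03 := h 0 3
  have h10 := h 1 0
  have h11 := h 1 1
  have h12 := h 1 2
  have h13 := h 1 3
  have h20 := h 2 0
  have h21 := h 2 1
  have h22 := h 2 2
  have h23 := h 2 3
  have h30 := h 3 0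
  have h31 := h 3 1
  have h32 := h 3 2
  have h33 := h 3 3
  simp [toM, toVec, AQ, Matrix.mul_apply, Matrix.sub_apply, Fin.sum_univ_four, Matrix.vecHead, Matrix.vecTail] at h00 h01 h02 h03 h10 h11 h12 h13 h20 h21 h22 h23 h30 h31 h32 h33
  exact ⟨(by omega : (4*a1 + 4*b1 + 2*c1 + 2*d1 - 4) % 4 = 0), (by omega : (4*a2 + 4*b2 + 2*c2 + 2*d2 - 4) % 4 = 0), (by omega : (4*a3 + 4*b3 + 2*c3 + 2*d3 - 2) % 4 = 0), (by omega : (4*a4 + 4*b4 + 2*c4 + 2*d4 - 2) % 4 = 0), (by omega : (4*a1 + 8*b1 + 4*c1 + 4*d1 - 4) % 4 = 0), (by omega : (4*a2 + 8*b2 + 4*c2 + 4*d2 - 8) % 4 = 0), (by omega : (4*a3 + 8*b3 + 4*c3 + 4*d3 - 4) % 4 = 0), (by omega : (4*a4 + 8*b4 + 4*c4 + 4*d4 - 4) % 4 = 0), (by omega : (2*a1 + 4*b1 + 4*c1 + 2*d1 - 2) % 4 = 0), (by omega : (2*a2 + 4*b2 + 4*c2 + 2*d2 - 4) % 4 = 0),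 (by omega : (2*a3 + 4*b3 + 4*c3 + 2*d3 - 4) % 4 = 0), (by omega : (2*a4 + 4*b4 + 4*c4 + 2*d4 - 2) % 4 = 0), (by omega : (2*a1 + 4*b1 + 2*c1 + 4*d1 - 2) % 4 = 0), (by omega : (2*a2 + 4*b2 + 2*c2 + 4*d2 - 4) % 4 = 0), (by omega : (2*a3 + 4*b3 + 2*c3 + 4*d3 - 2) % 4 = 0), (by omega : (2*a4 + 4*b4 + 2*c4 + 4*d4 - 4) % 4 = 0)⟩

lemma mem_SO_iff (u : (Matrix (Fin 4) (Fin 4) ℤ)ˣ) :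
    u ∈ SOzero QD4 ↔ ((u : Matrix (Fin 4) (Fin 4) ℤ) * QD4 * (u : Matrix (Fin 4) (Fin 4) ℤ)ᵀ = QD4 ∧
      (u : Matrix (Fin 4) (Fin 4) ℤ).det = 1 ∧
      ∀ x : Fin 4 → ℚ, IsIntVec (Matrix.vecMul x (QD4.map ((↑) : ℤ → ℚ))) →
        IsIntVec (Matrix.vecMul x (((u : Matrix (Fin 4) (Fin 4) ℤ)).map ((↑) : ℤ → ℚ)) - x)) :=
  Iff.rfl

lemma key1 (u : (Matrix (Fin 4) (Fin 4) ℤ)ˣ) (hu : u ∈ SOzero QD4) :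
    tupM (u : Matrix (Fin 4) (Fin 4) ℤ) ∈ LX := by
  obtain ⟨h1, h2, h3⟩ := (mem_SO_iff u).mp hu
  set M : Matrix (Fin 4) (Fin 4) ℤ := (u : Matrix (Fin 4) (Fin 4) ℤ) with hM
  have hB : ∀ i j, Bf (M i) (M j) = QD4 i j := fun i j => by rw [← entry_eq M i j, h1]
  have hm := dir1 M h3
  have hmod : ModT (tupM M) := mod_bridge2 (tupM M) (by rw [toM_tupM]; exact hm)
  have hdet : detT (tupM M) = 1 := (det4_eq M).symm.trans h2
  have m0 : ((M 0 0, M 0 1, M 0 2, M 0 3) : Rt) ∈ rootsT :=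
    rowMem (M 0 0) (M 0 1) (M 0 2) (M 0 3) ((hB 0 0).trans (by decide))
  have m1 : ((M 1 0, M 1 1, M 1 2, M 1 3) : Rt) ∈ rootsT :=
    rowMem (M 1 0) (M 1 1) (M 1 2) (M 1 3) ((hB 1 1).trans (by decide))
  have m2 : ((M 2 0, M 2 1, M 2 2, M 2 3) : Rt) ∈ rootsT :=
    rowMem (M 2 0) (M 2 1) (M 2 2) (M 2 3) ((hB 2 2).trans (by decide))
  have m3 : ((M 3 0, M 3 1, M 3 2, M 3 3) : Rt) ∈ rootsT :=
    rowMem (M 3 0) (M 3 1) (M 3 2) (M 3 3) ((hB 3 3).trans (by decide))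
  exact mainSearch _ m0 _ m1 ((hB 0 1).trans (by decide))
    _ m2 ((hB 0 2).trans (by decide)) ((hB 1 2).trans (by decide))
    _ m3 ((hB 0 3).trans (by decide)) ((hB 1 3).trans (by decide)) ((hB 2 3).trans (by decide))
    hdet hmod

lemma key2 (t : TT) (ht : t ∈ LX) :
    ∃ u : (Matrix (Fin 4) (Fin 4) ℤ)ˣ, u ∈ SOzero QD4 ∧ tupM (u : Matrix (Fin 4) (Fin 4) ℤ) = t := by
  obtain ⟨hG, hdet, hmod⟩ := memLT t ht
  have hGram : toM t * QD4 * (toM t)ᵀ = QD4 := gram_of t hG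
  have hdet' : (toM t).det = 1 := (det4_eq (toM t)).trans hdet
  have hunit : IsUnit (toM t) := (Matrix.isUnit_iff_isUnit_det _).mpr (by rw [hdet']; exact isUnit_one)
  obtain ⟨u, hu⟩ := hunit
  refine ⟨u, ?_, ?_⟩
  · rw [mem_SO_iff]
    refine ⟨?_, ?_, ?_⟩
    · rw [hu]; exact hGram
    · rw [hu]; exact hdet'
    · intro x hx
      rw [hu]
      exact dir2 (toM t) (mod_bridge1 t hmod) x hx
  · rw [hu, tupM_toM]

theorem statement8 : Nat.card ↥(SOzero QD4) = 96 := by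
  have hfun : ∀ u : ↥(SOzero QD4),
      tupM ((u : (Matrix (Fin 4) (Fin 4) ℤ)ˣ) : Matrix (Fin 4) (Fin 4) ℤ) ∈ LX.toFinset :=
    fun u => List.mem_toFinset.mpr (key1 u.1 u.2)
  let f : ↥(SOzero QD4) → {t : TT // t ∈ LX.toFinset} := fun u => ⟨_, hfun u⟩
  have hinj : Function.Injective f := by
    intro u v h
    have h' : tupM ((u.1 : Matrix (Fin 4) (Fin 4) ℤ)) = tupM ((v.1 : Matrix (Fin 4) (Fin 4) ℤ)) :=
      congrArg Subtype.val h
    have h'' : (u.1 : Matrix (Fin 4) (Fin 4) ℤ) = (v.1 : Matrix (Fin 4) (Fin 4) ℤ) := by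
      have := congrArg toM h'
      rwa [toM_tupM, toM_tupM] at this
    exact Subtype.ext (Units.ext h'')
  have hsurj : Function.Surjective f := by
    rintro ⟨t, ht⟩
    obtain ⟨u, hmem, htup⟩ := key2 t (List.mem_toFinset.mp ht)
    exact ⟨⟨u, hmem⟩, Subtype.ext htup⟩
  have hcard : (LX.toFinset).card = 96 := by decide
  exact (Nat.card_eq_of_bijective f ⟨hinj, hsurj⟩).trans
    ((Nat.card_eq_finsetCard LX.toFinset).trans hcard)
end

section
/- Let Λ_{A₁A₃} be the lattice ℤ⁴ with Gram matrix [[2,0,0,0],[0,2,−1,0],[0,−1,2,−1],[0,0,−1,2]] (the orthogonal sum of the A₁ and A₃ root lattices). Then the group SO₀(Λ_{A₁A₃}) of determinant-1 automorphisms of Λ_{A₁A₃} that induce the identity map on the discriminant group is isomorphic to the symmetric group Sym(4); in particular it has order 24. -/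
/-!
STATEMENT 10: The group SO₀(Λ_{A₁A₃}) of determinant-1 automorphisms of the
orthogonal sum of the A₁ and A₃ root lattices that induce the identity map on the
discriminant group is isomorphic to the symmetric group Sym(4); in particular it has
order 24.
-/

open Matrix

open Matrix

/-- The Gram matrix of the lattice A₁ ⊕ A₃. -/
def QA1A3 : Matrix (Fin 4) (Fin 4) ℤ := !![2,0,0,0; 0,2,-1,0; 0,-1,2,-1; 0,0,-1,2]

/-! ### Auxiliary machinery for statement 10 -/

def adjQbar : Matrix (Fin 4) (Fin 4) ℤ := !![4,0,0,0; 0,6,4,2; 0,4,8,4; 0,2,4,6]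

def r3 : Fin 12 → Fin 4 → ℤ :=
  ![![0,1,0,0],![0,1,1,0],![0,1,1,1],![0,0,1,0],![0,0,1,1],![0,0,0,1],
    ![0,-1,0,0],![0,-1,-1,0],![0,-1,-1,-1],![0,0,-1,0],![0,0,-1,-1],![0,0,0,-1]]

def gram (v w : Fin 4 → ℤ) : ℤ := v ⬝ᵥ QA1A3.mulVec w

def mySign (σ : Equiv.Perm (Fin 4)) : ℤ :=
  if (Finset.univ.filter (fun p : Fin 4 × Fin 4 => p.1 < p.2 ∧ σ p.2 < σ p.1)).card % 2 = 0
    then 1 else -1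

def phiMat (σ : Equiv.Perm (Fin 4)) : Matrix (Fin 4) (Fin 4) ℤ :=
  Matrix.of fun i j =>
    if i = 0 then (if j = 0 then mySign σ else 0)
    else if j = 0 then 0
    else
      let a := (σ (i - 1) : ℕ); let b := (σ i : ℕ)
      if a < (j:ℕ) ∧ (j:ℕ) ≤ b then 1 else if b < (j:ℕ) ∧ (j:ℕ) ≤ a then -1 else 0

def phi (σ : Equiv.Perm (Fin 4)) : Matrix (Fin 4) (Fin 4) ℤ := phiMat σ⁻¹

def build (s : Bool) (k1 k2 k3 : Fin 12) : Matrix (Fin 4) (Fin 4) ℤ :=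
  Matrix.of ![![(if s then 1 else -1 : ℤ),0,0,0], r3 k1, r3 k2, r3 k3]

lemma r3_zero : ∀ k : Fin 12, r3 k 0 = 0 := by decide

lemma phi_one : phi 1 = 1 := by decide

set_option maxHeartbeats 4000000 in
lemma phi_mul : ∀ σ τ : Equiv.Perm (Fin 4), phi (σ * τ) = phi σ * phi τ := by decide

lemma phi_inj1 : ∀ σ : Equiv.Perm (Fin 4), phi σ = 1 → σ = 1 := by decide

set_option maxHeartbeats 2000000 in
lemma phi_unit : ∀ σ : Equiv.Perm (Fin 4), phi σ * phi σ⁻¹ = 1 ∧ phi σ⁻¹ * phi σ = 1 := by decide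

set_option maxHeartbeats 2000000 in
lemma phi_Q : ∀ σ : Equiv.Perm (Fin 4), phi σ * QA1A3 * (phi σ)ᵀ = QA1A3 := by decide

set_option maxHeartbeats 2000000 in
lemma phi_det : ∀ σ : Equiv.Perm (Fin 4), (phi σ).det = 1 := by decide

set_option maxHeartbeats 2000000 in
lemma phi_div : ∀ σ : Equiv.Perm (Fin 4), ∀ i j, (8:ℤ) ∣ (adjQbar * (phi σ - 1)) i j := by decide

set_option maxHeartbeats 8000000 in
theorem classify : ∀ (s : Bool) (k1 k2 : Fin 12), gram (r3 k1) (r3 k2) = -1 →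
    ∀ k3 : Fin 12, gram (r3 k1) (r3 k3) = 0 → gram (r3 k2) (r3 k3) = -1 →
    (build s k1 k2 k3).det = 1 →
    (∀ i j, (8:ℤ) ∣ (adjQbar * (build s k1 k2 k3 - 1)) i j) →
    ∃ σ : Equiv.Perm (Fin 4), build s k1 k2 k3 = phi σ := by decide

lemma gram_expand (v w : Fin 4 → ℤ) : gram v w =
    2*v 0*w 0 + 2*v 1*w 1 + 2*v 2*w 2 + 2*v 3*w 3 - v 1*w 2 - v 2*w 1 - v 2*w 3 - v 3*w 2 := by
  simp [_root_.gram, QA1A3, Matrix.mulVec, dotProduct, Fin.sum_univ_four, Matrix.vecHead,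
    Matrix.vecTail, Function.comp]
  ring

lemma UQUT_entry (U : Matrix (Fin 4) (Fin 4) ℤ) (i j : Fin 4) :
    (U * QA1A3 * Uᵀ) i j = gram (U i) (U j) := by
  simp only [Matrix.mul_apply, Matrix.transpose_apply, _root_.gram, Matrix.mulVec, dotProduct,
    Finset.sum_mul, Finset.mul_sum, Fin.sum_univ_four]
  ring

lemma adj_row0 (M : Matrix (Fin 4) (Fin 4) ℤ) (j : Fin 4) :
    (adjQbar * M) 0 j = 4 * M 0 j := by
  simp [adjQbar, Matrix.mul_apply, Fin.sum_univ_four, Matrix.vecHead, Matrix.vecTail,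
    Function.comp]

lemma row0_lemma (a b c d : ℤ) (h : 2*a^2+2*b^2+2*c^2+2*d^2-2*b*c-2*c*d = 2) (ha : Odd a) :
    (a = 1 ∨ a = -1) ∧ b = 0 ∧ c = 0 ∧ d = 0 := by
  have ha0 : a ≠ 0 := by rintro rfl; simp at ha
  have h0 : 0 < a^2 := by positivity
  have ha1 : 1 ≤ a^2 := h0
  have hb0 : b = 0 := by nlinarith [sq_nonneg (b-c), sq_nonneg (c-d), sq_nonneg d, sq_nonneg b]
  have hd0 : d = 0 := by nlinarith [sq_nonneg (b-c), sq_nonneg (c-d), sq_nonneg b, sq_nonneg d]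
  have hc0 : c = 0 := by nlinarith [sq_nonneg (b-c), sq_nonneg (c-d), sq_nonneg b, sq_nonneg d]
  subst hb0 hd0 hc0
  refine ⟨?_, rfl, rfl, rfl⟩
  have : (a-1)*(a+1) = 0 := by nlinarith
  rcases mul_eq_zero.mp this with h' | h' <;> [left; right] <;> linarith

theorem rootA3 (b c d : ℤ) (h : 2*b^2+2*c^2+2*d^2-2*b*c-2*c*d = 2) :
    ∃ k : Fin 12, b = r3 k 1 ∧ c = r3 k 2 ∧ d = r3 k 3 := by
  have hb2 : b ≤ 1 := by nlinarith [sq_nonneg (b-1), sq_nonneg (b-c), sq_nonneg (c-d), sq_nonneg d]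
  have hb1 : -1 ≤ b := by nlinarith [sq_nonneg (b+1), sq_nonneg (b-c), sq_nonneg (c-d), sq_nonneg d]
  have hd2 : d ≤ 1 := by nlinarith [sq_nonneg (d-1), sq_nonneg (b-c), sq_nonneg (c-d), sq_nonneg b]
  have hd1 : -1 ≤ d := by nlinarith [sq_nonneg (d+1), sq_nonneg (b-c), sq_nonneg (c-d), sq_nonneg b]
  have hc2 : c ≤ b + 1 := by nlinarith [sq_nonneg (b-c+1), sq_nonneg b, sq_nonneg (c-d), sq_nonneg d]
  have hc1 : b - 1 ≤ c := by nlinarith [sq_nonneg (b-c-1), sq_nonneg b, sq_nonneg (c-d), sq_nonneg d]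
  have hc2' : c ≤ 2 := by omega
  have hc1' : -2 ≤ c := by omega
  clear hc1 hc2
  interval_cases b <;> interval_cases c <;> interval_cases d <;>
    first
      | exact ⟨0, by decide⟩ | exact ⟨1, by decide⟩ | exact ⟨2, by decide⟩
      | exact ⟨3, by decide⟩ | exact ⟨4, by decide⟩ | exact ⟨5, by decide⟩
      | exact ⟨6, by decide⟩ | exact ⟨7, by decide⟩ | exact ⟨8, by decide⟩
      | exact ⟨9, by decide⟩ | exact ⟨10, by decide⟩ | exact ⟨11, by decide⟩
      | omega

lemma AQbar : adjQbar * QA1A3 = (8:ℤ) • 1 := by decide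
lemma QAbar : QA1A3 * adjQbar = (8:ℤ) • 1 := by decide

noncomputable abbrev Qq : Matrix (Fin 4) (Fin 4) ℚ := QA1A3.map ((↑) : ℤ → ℚ)
noncomputable abbrev Aq : Matrix (Fin 4) (Fin 4) ℚ := adjQbar.map ((↑) : ℤ → ℚ)

lemma QqAq : Qq * Aq = (8:ℚ) • 1 := by
  rw [← mapq_mul, QAbar]
  ext i j
  by_cases h : i = j <;>
    simp only [Matrix.map_apply, Matrix.smul_apply, Matrix.one_apply, h, if_true, if_false,
      smul_eq_mul, mul_one, mul_zero, Int.cast_mul, Int.cast_ofNat] <;> norm_num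

lemma Qq_inv1 : Qq * ((8:ℚ)⁻¹ • Aq) = 1 := by
  rw [Matrix.mul_smul, QqAq, smul_smul]; norm_num

lemma B1 (U : Matrix (Fin 4) (Fin 4) ℤ)
    (hdiv : ∀ i j, (8:ℤ) ∣ (adjQbar * (U - 1)) i j) :
    ∀ x : Fin 4 → ℚ, IsIntVec (Matrix.vecMul x Qq) →
      IsIntVec (Matrix.vecMul x (U.map ((↑) : ℤ → ℚ)) - x) := by
  intro x hx
  choose E hE using fun i j => hdiv i j
  set m := Matrix.vecMul x Qq with hm
  have hxm : x = Matrix.vecMul m ((8:ℚ)⁻¹ • Aq) := by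
    rw [hm, Matrix.vecMul_vecMul, Qq_inv1, Matrix.vecMul_one]
  have hmap : (U.map ((↑) : ℤ → ℚ)) - 1 = (U - 1).map ((↑) : ℤ → ℚ) := by
    ext i j
    by_cases h : i = j <;>
      simp [Matrix.map_apply, Matrix.sub_apply, Matrix.one_apply, h]
  have hEq : ((8:ℚ)⁻¹ • Aq) * ((U - 1).map ((↑) : ℤ → ℚ))
      = (Matrix.of E).map ((↑) : ℤ → ℚ) := by
    rw [Matrix.smul_mul, ← mapq_mul]
    ext i j
    simp only [Matrix.smul_apply, Matrix.map_apply, Matrix.of_apply, hE i j, smul_eq_mul]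
    push_cast
    ring
  have key : Matrix.vecMul x (U.map ((↑) : ℤ → ℚ)) - x
      = Matrix.vecMul m ((Matrix.of E).map ((↑) : ℤ → ℚ)) := by
    rw [← hEq, ← Matrix.vecMul_vecMul, ← hxm, ← hmap, Matrix.vecMul_sub, Matrix.vecMul_one]
  rw [key]
  exact intvec_vecMul hx _

lemma B2 (U : Matrix (Fin 4) (Fin 4) ℤ)
    (h : ∀ x : Fin 4 → ℚ, IsIntVec (Matrix.vecMul x Qq) →
      IsIntVec (Matrix.vecMul x (U.map ((↑) : ℤ → ℚ)) - x)) :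
    ∀ i j, (8:ℤ) ∣ (adjQbar * (U - 1)) i j := by
  intro i j
  set x : Fin 4 → ℚ := fun k => (8:ℚ)⁻¹ * (adjQbar i k : ℚ) with hxdef
  have hsum : ∀ (M : Matrix (Fin 4) (Fin 4) ℤ) (k : Fin 4),
      Matrix.vecMul x (M.map ((↑) : ℤ → ℚ)) k = (8:ℚ)⁻¹ * (((adjQbar * M) i k : ℤ) : ℚ) := by
    intro M k
    simp only [Matrix.vecMul, dotProduct, hxdef, Matrix.map_apply, mul_assoc]
    rw [← Finset.mul_sum, Matrix.mul_apply]
    push_cast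
    ring
  have hx : IsIntVec (Matrix.vecMul x Qq) := by
    intro k
    refine ⟨if i = k then 1 else 0, ?_⟩
    rw [show (Qq : Matrix (Fin 4) (Fin 4) ℚ) = QA1A3.map ((↑) : ℤ → ℚ) from rfl,
      hsum QA1A3 k, AQbar]
    by_cases hik : i = k <;>
      simp only [Matrix.smul_apply, Matrix.one_apply, hik, if_true, if_false, smul_eq_mul,
        mul_one, mul_zero] <;> push_cast <;> norm_num
  obtain ⟨c, hc⟩ := h x hx j
  rw [Pi.sub_apply, hsum U j, hxdef] at hc
  refine ⟨c, ?_⟩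
  have hQ : ((adjQbar * (U - 1)) i j : ℚ) = ((adjQbar * U) i j : ℚ) - ((adjQbar) i j : ℚ) := by
    rw [mul_sub, mul_one]
    push_cast [Matrix.sub_apply]
    ring
  have hfin : ((adjQbar * (U - 1)) i j : ℚ) = 8 * (c : ℚ) := by
    rw [hQ]
    field_simp at hc ⊢
    linarith [hc]
  exact_mod_cast hfin

def PhiU (σ : Equiv.Perm (Fin 4)) : (Matrix (Fin 4) (Fin 4) ℤ)ˣ :=
  ⟨phi σ, phi σ⁻¹, (phi_unit σ).1, (phi_unit σ).2⟩

lemma PhiU_mem (σ : Equiv.Perm (Fin 4)) : PhiU σ ∈ SOzero QA1A3 :=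
  ⟨phi_Q σ, phi_det σ, B1 _ (phi_div σ)⟩

def fhom : Equiv.Perm (Fin 4) →* ↥(SOzero QA1A3) where
  toFun := fun σ => ⟨PhiU σ, PhiU_mem σ⟩
  map_one' := Subtype.ext (Units.ext phi_one)
  map_mul' := fun σ τ => Subtype.ext (Units.ext (phi_mul σ τ))

lemma fhom_inj : Function.Injective fhom := by
  refine (injective_iff_map_eq_one fhom).mpr (fun σ hσ => ?_)
  have : phi σ = 1 := congrArg (fun u : ↥(SOzero QA1A3) => ((u : (Matrix (Fin 4) (Fin 4) ℤ)ˣ) :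
    Matrix (Fin 4) (Fin 4) ℤ)) hσ
  exact phi_inj1 σ this

lemma fhom_surj : Function.Surjective fhom := by
  rintro ⟨u, hu⟩
  obtain ⟨h1, h2, h3⟩ := hu
  set U : Matrix (Fin 4) (Fin 4) ℤ := (u : Matrix (Fin 4) (Fin 4) ℤ) with hUdef
  have hdiv : ∀ i j, (8:ℤ) ∣ (adjQbar * (U - 1)) i j := B2 U h3
  have hent : ∀ i j, gram (U i) (U j) = QA1A3 i j := fun i j => by
    rw [← UQUT_entry, h1]
  -- U 0 0 is odd
  have hodd : Odd (U 0 0) := by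
    have h8 := hdiv 0 0
    rw [adj_row0] at h8
    have hsub : (U - 1) 0 0 = U 0 0 - 1 := by
      simp [Matrix.sub_apply, Matrix.one_apply]
    rw [hsub] at h8
    obtain ⟨t, ht⟩ := h8
    exact Int.odd_iff.mpr (by omega)
  -- row 0 is (±1, 0, 0, 0)
  have h00 : 2*(U 0 0)^2+2*(U 0 1)^2+2*(U 0 2)^2+2*(U 0 3)^2
      - 2*(U 0 1)*(U 0 2) - 2*(U 0 2)*(U 0 3) = 2 := by
    have e := hent 0 0
    rw [gram_expand] at e
    have : QA1A3 0 0 = 2 := by decide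
    rw [this] at e
    ring_nf at e ⊢
    linarith
  obtain ⟨ha, hb, hc, hd⟩ := row0_lemma _ _ _ _ h00 hodd
  -- first column below row 0 vanishes
  have hcol : ∀ i : Fin 4, QA1A3 0 i = 0 → U i 0 = 0 := by
    intro i hQi
    have e := hent 0 i
    rw [gram_expand, hb, hc, hd, hQi] at e
    rcases ha with ha | ha <;> rw [ha] at e <;> ring_nf at e <;> linarith
  have h10 : U 1 0 = 0 := hcol 1 (by decide)
  have h20 : U 2 0 = 0 := hcol 2 (by decide)
  have h30 : U 3 0 = 0 := hcol 3 (by decide)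
  -- rows 1..3 are A3 roots
  have hrow : ∀ i : Fin 4, U i 0 = 0 → QA1A3 i i = 2 →
      2*(U i 1)^2+2*(U i 2)^2+2*(U i 3)^2 - 2*(U i 1)*(U i 2) - 2*(U i 2)*(U i 3) = 2 := by
    intro i hi0 hQi
    have e := hent i i
    rw [gram_expand, hi0, hQi] at e
    ring_nf at e ⊢
    linarith
  obtain ⟨k1, hk1b, hk1c, hk1d⟩ := rootA3 _ _ _ (hrow 1 h10 (by decide))
  obtain ⟨k2, hk2b, hk2c, hk2d⟩ := rootA3 _ _ _ (hrow 2 h20 (by decide))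
  obtain ⟨k3, hk3b, hk3c, hk3d⟩ := rootA3 _ _ _ (hrow 3 h30 (by decide))
  have hU1 : U 1 = r3 k1 := by
    ext j; fin_cases j
    · exact h10.trans (r3_zero k1).symm
    · exact hk1b
    · exact hk1c
    · exact hk1d
  have hU2 : U 2 = r3 k2 := by
    ext j; fin_cases j
    · exact h20.trans (r3_zero k2).symm
    · exact hk2b
    · exact hk2c
    · exact hk2d
  have hU3 : U 3 = r3 k3 := by
    ext j; fin_cases j
    · exact h30.trans (r3_zero k3).symm
    · exact hk3b
    · exact hk3c
    · exact hk3d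
  have hg12 : gram (r3 k1) (r3 k2) = -1 := by
    have e := hent 1 2; rw [hU1, hU2] at e; rw [e]; decide
  have hg13 : gram (r3 k1) (r3 k3) = 0 := by
    have e := hent 1 3; rw [hU1, hU3] at e; rw [e]; decide
  have hg23 : gram (r3 k2) (r3 k3) = -1 := by
    have e := hent 2 3; rw [hU2, hU3] at e; rw [e]; decide
  have hUb : ∃ s : Bool, U = build s k1 k2 k3 := by
    rcases ha with ha | ha
    · refine ⟨true, ?_⟩
      ext i j
      fin_cases i <;> fin_cases j <;>
        first
          | exact ha | exact hb | exact hc | exact hd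
          | exact h10.trans (r3_zero k1).symm | exact hk1b | exact hk1c | exact hk1d
          | exact h20.trans (r3_zero k2).symm | exact hk2b | exact hk2c | exact hk2d
          | exact h30.trans (r3_zero k3).symm | exact hk3b | exact hk3c | exact hk3d
    · refine ⟨false, ?_⟩
      ext i j
      fin_cases i <;> fin_cases j <;>
        first
          | exact ha | exact hb | exact hc | exact hd
          | exact h10.trans (r3_zero k1).symm | exact hk1b | exact hk1c | exact hk1d
          | exact h20.trans (r3_zero k2).symm | exact hk2b | exact hk2c | exact hk2d
          | exact h30.trans (r3_zero k3).symm | exact hk3b | exact hk3c | exact hk3d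
  obtain ⟨s, hU⟩ := hUb
  have hdet : (build s k1 k2 k3).det = 1 := by rw [← hU]; exact h2
  have hdiv' : ∀ i j, (8:ℤ) ∣ (adjQbar * (build s k1 k2 k3 - 1)) i j := by
    rw [← hU]; exact hdiv
  obtain ⟨σ, hσ⟩ := classify s k1 k2 hg12 k3 hg13 hg23 hdet hdiv'
  refine ⟨σ, Subtype.ext (Units.ext ?_)⟩
  show phi σ = (u : Matrix (Fin 4) (Fin 4) ℤ)
  rw [← hσ, ← hU]

theorem statement10 :
    Nonempty (↥(SOzero QA1A3) ≃* Equiv.Perm (Fin 4)) ∧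
    Nat.card ↥(SOzero QA1A3) = 24 := by
  have e : Equiv.Perm (Fin 4) ≃* ↥(SOzero QA1A3) :=
    MulEquiv.ofBijective fhom ⟨fhom_inj, fhom_surj⟩
  refine ⟨⟨e.symm⟩, ?_⟩
  have hcard : Nat.card ↥(SOzero QA1A3) = Nat.card (Equiv.Perm (Fin 4)) :=
    Nat.card_congr e.symm.toEquiv
  rw [hcard, Nat.card_eq_fintype_card]
  simp [Fintype.card_perm, Nat.factorial]
end

section
/- Let Λ_{A₂²} be the lattice ℤ⁴ with Gram matrix [[2,−1,0,0],[−1,2,0,0],[0,0,2,−1],[0,0,−1,2]] (the orthogonal sum of two copies of the A₂ root lattice). Then the group SO₀(Λ_{A₂²}) of determinant-1 automorphisms of Λ_{A₂²} that induce the identity map on the discriminant group has order 18. -/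
/-!
STATEMENT 11: The group SO₀(Λ_{A₂²}) of determinant-1 automorphisms of the
orthogonal sum of two copies of the A₂ root lattice that induce the identity map on
the discriminant group has order 18.
-/

open Matrix

open Matrix

/-- The Gram matrix of the lattice A₂ ⊕ A₂. -/
def QA2A2 : Matrix (Fin 4) (Fin 4) ℤ := !![2,-1,0,0; -1,2,0,0; 0,0,2,-1; 0,0,-1,2]

def A4 : Matrix (Fin 4) (Fin 4) ℤ := !![2,1,0,0; 1,2,0,0; 0,0,2,1; 0,0,1,2]
def T3 : Matrix (Fin 4) (Fin 4) ℤ := !![3,0,0,0; 0,3,0,0; 0,0,3,0; 0,0,0,3]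

lemma hQA4 : QA2A2 * A4 = T3 := by decide
lemma hA4Q : A4 * QA2A2 = T3 := by decide

lemma mapq_sub (A B : Matrix (Fin 4) (Fin 4) ℤ) :
    (A - B).map ((↑) : ℤ → ℚ) = A.map ((↑) : ℤ → ℚ) - B.map ((↑) : ℤ → ℚ) := by
  ext i j; simp [Matrix.map_apply, Matrix.sub_apply]

lemma mapq_smul3 (D : Matrix (Fin 4) (Fin 4) ℤ) :
    (((3:ℤ) • D : Matrix (Fin 4) (Fin 4) ℤ)).map ((↑) : ℤ → ℚ)
      = (3 : ℚ) • D.map ((↑) : ℤ → ℚ) := by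
  ext i j
  simp only [Matrix.map_apply, Matrix.smul_apply, smul_eq_mul, Pi.smul_apply]
  push_cast
  ring

lemma vecMul_smulMat (c : ℚ) (N : Matrix (Fin 4) (Fin 4) ℚ) (x : Fin 4 → ℚ) :
    Matrix.vecMul x (c • N) = c • Matrix.vecMul x N := by
  ext j
  simp only [Matrix.vecMul, dotProduct, Matrix.smul_apply, Pi.smul_apply, smul_eq_mul,
    Finset.mul_sum]
  exact Finset.sum_congr rfl fun k _ => by ring

lemma vecMulT3 (x : Fin 4 → ℚ) :
    Matrix.vecMul x (T3.map ((↑) : ℤ → ℚ)) = (3 : ℚ) • x := by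
  ext j
  fin_cases j <;>
    simp [Matrix.vecMul, dotProduct, Fin.sum_univ_four, T3, Matrix.map_apply,
      Matrix.vecHead, Matrix.vecTail] <;> ring

lemma key_row (i : Fin 4) (N : Matrix (Fin 4) (Fin 4) ℤ) (j : Fin 4) :
    Matrix.vecMul (fun k => (A4 i k : ℚ)/3) (N.map ((↑) : ℤ → ℚ)) j = ((A4 * N) i j : ℚ)/3 := by
  simp only [Matrix.vecMul, dotProduct, Matrix.map_apply, Matrix.mul_apply,
    Fin.sum_univ_four]
  push_cast
  ring

lemma T3div3 : ∀ i j : Fin 4, ∃ c : ℤ, ((T3 i j : ℚ))/3 = (c : ℚ) := by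
  intro i j
  fin_cases i <;> fin_cases j <;>
    first
      | (refine ⟨1, ?_⟩; norm_num [T3]; done)
      | (refine ⟨0, ?_⟩; simp [T3, Matrix.vecHead, Matrix.vecTail])

lemma disc_iff (M : Matrix (Fin 4) (Fin 4) ℤ) :
    (∀ x : Fin 4 → ℚ, IsIntVec (Matrix.vecMul x (QA2A2.map ((↑) : ℤ → ℚ))) →
      IsIntVec (Matrix.vecMul x (M.map ((↑) : ℤ → ℚ)) - x)) ↔
    (∀ i j, (A4 * (M - 1)) i j % 3 = 0) := by
  constructor
  · intro h i j
    have hxQ : IsIntVec (Matrix.vecMul (fun k => (A4 i k : ℚ)/3) (QA2A2.map ((↑) : ℤ → ℚ))) := by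
      intro j'
      obtain ⟨c, hc⟩ := T3div3 i j'
      refine ⟨c, ?_⟩
      rw [key_row, hA4Q, hc]
    obtain ⟨c, hc⟩ := h _ hxQ j
    simp only [Pi.sub_apply] at hc
    rw [key_row] at hc
    have e2 : ((A4 * (M - 1)) i j : ℚ) = 3 * c := by
      have hsub : A4 * (M - 1) = A4 * M - A4 := by rw [Matrix.mul_sub, Matrix.mul_one]
      rw [hsub]
      push_cast [Matrix.sub_apply]
      linarith [hc]
    have e3 : (A4 * (M - 1)) i j = 3 * c := by exact_mod_cast e2
    omega
  · intro h x hx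
    choose y hy using hx
    set D : Matrix (Fin 4) (Fin 4) ℤ := Matrix.of (fun i j => (A4 * (M - 1)) i j / 3) with hDdef
    have hD3 : A4 * (M - 1) = (3:ℤ) • D := by
      ext i j
      have := h i j
      simp only [hDdef, Matrix.smul_apply, Matrix.of_apply, smul_eq_mul]
      omega
    have hD3' : A4 * M - A4 = (3:ℤ) • D := by
      rw [← hD3, Matrix.mul_sub, Matrix.mul_one]
    have hyv : (fun t => ((y t : ℤ) : ℚ)) = Matrix.vecMul x (QA2A2.map ((↑) : ℤ → ℚ)) :=
      funext fun t => (hy t).symm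
    have h3x : Matrix.vecMul (fun t => ((y t : ℤ) : ℚ)) (A4.map ((↑) : ℤ → ℚ)) = (3 : ℚ) • x := by
      rw [hyv, Matrix.vecMul_vecMul, ← mapq_mul, hQA4, vecMulT3]
    have claim : Matrix.vecMul x (M.map ((↑) : ℤ → ℚ)) - x
        = Matrix.vecMul (fun t => ((y t : ℤ) : ℚ)) (D.map ((↑) : ℤ → ℚ)) := by
      apply smul_right_injective (Fin 4 → ℚ) (by norm_num : (3 : ℚ) ≠ 0)
      show (3:ℚ) • _ = (3:ℚ) • _
      rw [smul_sub, ← Matrix.smul_vecMul, ← h3x, Matrix.vecMul_vecMul,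
        ← vecMul_smulMat, ← mapq_smul3, ← hD3', mapq_sub, mapq_mul, Matrix.vecMul_sub]
    rw [claim]
    exact intvec_vecMul (fun t => ⟨y t, rfl⟩) D

def Pred (M : Matrix (Fin 4) (Fin 4) ℤ) : Prop :=
  M * QA2A2 * Mᵀ = QA2A2 ∧ M.det = 1 ∧ ∀ i j, (A4 * (M - 1)) i j % 3 = 0

lemma mem_iff (U : (Matrix (Fin 4) (Fin 4) ℤ)ˣ) :
    U ∈ SOzero QA2A2 ↔ Pred (U : Matrix (Fin 4) (Fin 4) ℤ) := by
  constructor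
  · rintro ⟨h1, h2, h3⟩
    exact ⟨h1, h2, (disc_iff _).1 h3⟩
  · rintro ⟨h1, h2, h3⟩
    exact ⟨h1, h2, (disc_iff _).2 h3⟩

def L : List (Matrix (Fin 4) (Fin 4) ℤ) :=
  [ !![-1,-1,0,0; 1,0,0,0; 0,0,-1,-1; 0,0,1,0],
    !![-1,-1,0,0; 1,0,0,0; 0,0,0,1; 0,0,-1,-1],
    !![-1,-1,0,0; 1,0,0,0; 0,0,1,0; 0,0,0,1],
    !![-1,0,0,0; 1,1,0,0; 0,0,-1,0; 0,0,1,1],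
    !![-1,0,0,0; 1,1,0,0; 0,0,0,-1; 0,0,-1,0],
    !![-1,0,0,0; 1,1,0,0; 0,0,1,1; 0,0,0,-1],
    !![0,-1,0,0; -1,0,0,0; 0,0,-1,0; 0,0,1,1],
    !![0,-1,0,0; -1,0,0,0; 0,0,0,-1; 0,0,-1,0],
    !![0,-1,0,0; -1,0,0,0; 0,0,1,1; 0,0,0,-1],
    !![0,1,0,0; -1,-1,0,0; 0,0,-1,-1; 0,0,1,0],
    !![0,1,0,0; -1,-1,0,0; 0,0,0,1; 0,0,-1,-1],
    !![0,1,0,0; -1,-1,0,0; 0,0,1,0; 0,0,0,1],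
    !![1,0,0,0; 0,1,0,0; 0,0,-1,-1; 0,0,1,0],
    !![1,0,0,0; 0,1,0,0; 0,0,0,1; 0,0,-1,-1],
    !![1,0,0,0; 0,1,0,0; 0,0,1,0; 0,0,0,1],
    !![1,1,0,0; 0,-1,0,0; 0,0,-1,0; 0,0,1,1],
    !![1,1,0,0; 0,-1,0,0; 0,0,0,-1; 0,0,-1,0],
    !![1,1,0,0; 0,-1,0,0; 0,0,1,1; 0,0,0,-1] ]

set_option maxHeartbeats 1600000 in
lemma root_class (a b c d : ℤ) (h : a*a - a*b + b*b + c*c - c*d + d*d = 1) :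
    (a = 1 ∧ b = 0 ∧ c = 0 ∧ d = 0) ∨ (a = -1 ∧ b = 0 ∧ c = 0 ∧ d = 0) ∨
    (a = 0 ∧ b = 1 ∧ c = 0 ∧ d = 0) ∨ (a = 0 ∧ b = -1 ∧ c = 0 ∧ d = 0) ∨
    (a = 1 ∧ b = 1 ∧ c = 0 ∧ d = 0) ∨ (a = -1 ∧ b = -1 ∧ c = 0 ∧ d = 0) ∨
    (a = 0 ∧ b = 0 ∧ c = 1 ∧ d = 0) ∨ (a = 0 ∧ b = 0 ∧ c = -1 ∧ d = 0) ∨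
    (a = 0 ∧ b = 0 ∧ c = 0 ∧ d = 1) ∨ (a = 0 ∧ b = 0 ∧ c = 0 ∧ d = -1) ∨
    (a = 0 ∧ b = 0 ∧ c = 1 ∧ d = 1) ∨ (a = 0 ∧ b = 0 ∧ c = -1 ∧ d = -1) := by
  have ha2 : a*a ≤ 1 := by nlinarith [sq_nonneg (2*b-a), sq_nonneg (2*d-c), sq_nonneg c]
  have hb2 : b*b ≤ 1 := by nlinarith [sq_nonneg (2*a-b), sq_nonneg (2*d-c), sq_nonneg c]
  have hc2 : c*c ≤ 1 := by nlinarith [sq_nonneg (2*d-c), sq_nonneg (2*b-a), sq_nonneg a]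
  have hd2 : d*d ≤ 1 := by nlinarith [sq_nonneg (2*c-d), sq_nonneg (2*b-a), sq_nonneg a]
  have ha : a = -1 ∨ a = 0 ∨ a = 1 := by
    have h1 : -1 ≤ a := by nlinarith
    have h2 : a ≤ 1 := by nlinarith
    omega
  have hb : b = -1 ∨ b = 0 ∨ b = 1 := by
    have h1 : -1 ≤ b := by nlinarith
    have h2 : b ≤ 1 := by nlinarith
    omega
  have hc : c = -1 ∨ c = 0 ∨ c = 1 := by
    have h1 : -1 ≤ c := by nlinarith
    have h2 : c ≤ 1 := by nlinarith
    omega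
  have hd : d = -1 ∨ d = 0 ∨ d = 1 := by
    have h1 : -1 ≤ d := by nlinarith
    have h2 : d ≤ 1 := by nlinarith
    omega
  rcases ha with rfl|rfl|rfl <;> rcases hb with rfl|rfl|rfl <;>
    rcases hc with rfl|rfl|rfl <;> rcases hd with rfl|rfl|rfl <;> revert h <;> decide

abbrev R12 (a b c d : ℤ) : Prop :=
    (a = 1 ∧ b = 0 ∧ c = 0 ∧ d = 0) ∨ (a = -1 ∧ b = 0 ∧ c = 0 ∧ d = 0) ∨
    (a = 0 ∧ b = 1 ∧ c = 0 ∧ d = 0) ∨ (a = 0 ∧ b = -1 ∧ c = 0 ∧ d = 0) ∨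
    (a = 1 ∧ b = 1 ∧ c = 0 ∧ d = 0) ∨ (a = -1 ∧ b = -1 ∧ c = 0 ∧ d = 0) ∨
    (a = 0 ∧ b = 0 ∧ c = 1 ∧ d = 0) ∨ (a = 0 ∧ b = 0 ∧ c = -1 ∧ d = 0) ∨
    (a = 0 ∧ b = 0 ∧ c = 0 ∧ d = 1) ∨ (a = 0 ∧ b = 0 ∧ c = 0 ∧ d = -1) ∨
    (a = 0 ∧ b = 0 ∧ c = 1 ∧ d = 1) ∨ (a = 0 ∧ b = 0 ∧ c = -1 ∧ d = -1)

lemma pair_class (a b c d a' b' c' d' : ℤ)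
    (h1 : R12 a b c d) (h2 : R12 a' b' c' d')
    (m1 : (2*a + a' - 2) % 3 = 0) (m2 : (2*b + b' - 1) % 3 = 0)
    (m3 : (2*c + c') % 3 = 0) (m4 : (2*d + d') % 3 = 0)
    (m5 : (a + 2*a' - 1) % 3 = 0) (m6 : (b + 2*b' - 2) % 3 = 0)
    (m7 : (c + 2*c') % 3 = 0) (m8 : (d + 2*d') % 3 = 0) :
    (a = -1 ∧ b = -1 ∧ c = 0 ∧ d = 0 ∧ a' = 1 ∧ b' = 0 ∧ c' = 0 ∧ d' = 0) ∨
    (a = -1 ∧ b = 0 ∧ c = 0 ∧ d = 0 ∧ a' = 1 ∧ b' = 1 ∧ c' = 0 ∧ d' = 0) ∨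
    (a = 0 ∧ b = -1 ∧ c = 0 ∧ d = 0 ∧ a' = -1 ∧ b' = 0 ∧ c' = 0 ∧ d' = 0) ∨
    (a = 0 ∧ b = 1 ∧ c = 0 ∧ d = 0 ∧ a' = -1 ∧ b' = -1 ∧ c' = 0 ∧ d' = 0) ∨
    (a = 1 ∧ b = 0 ∧ c = 0 ∧ d = 0 ∧ a' = 0 ∧ b' = 1 ∧ c' = 0 ∧ d' = 0) ∨
    (a = 1 ∧ b = 1 ∧ c = 0 ∧ d = 0 ∧ a' = 0 ∧ b' = -1 ∧ c' = 0 ∧ d' = 0) := by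
  rcases h1 with ⟨rfl,rfl,rfl,rfl⟩|⟨rfl,rfl,rfl,rfl⟩|⟨rfl,rfl,rfl,rfl⟩|⟨rfl,rfl,rfl,rfl⟩|⟨rfl,rfl,rfl,rfl⟩|⟨rfl,rfl,rfl,rfl⟩|⟨rfl,rfl,rfl,rfl⟩|⟨rfl,rfl,rfl,rfl⟩|⟨rfl,rfl,rfl,rfl⟩|⟨rfl,rfl,rfl,rfl⟩|⟨rfl,rfl,rfl,rfl⟩|⟨rfl,rfl,rfl,rfl⟩ <;>
    rcases h2 with ⟨rfl,rfl,rfl,rfl⟩|⟨rfl,rfl,rfl,rfl⟩|⟨rfl,rfl,rfl,rfl⟩|⟨rfl,rfl,rfl,rfl⟩|⟨rfl,rfl,rfl,rfl⟩|⟨rfl,rfl,rfl,rfl⟩|⟨rfl,rfl,rfl,rfl⟩|⟨rfl,rfl,rfl,rfl⟩|⟨rfl,rfl,rfl,rfl⟩|⟨rfl,rfl,rfl,rfl⟩|⟨rfl,rfl,rfl,rfl⟩|⟨rfl,rfl,rfl,rfl⟩ <;>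
    revert m1 m2 m3 m4 m5 m6 m7 m8 <;> decide

lemma det4_s11 (M : Matrix (Fin 4) (Fin 4) ℤ) (z02 : M 0 2 = 0) (z03 : M 0 3 = 0)
    (z12 : M 1 2 = 0) (z13 : M 1 3 = 0) (z20 : M 2 0 = 0) (z21 : M 2 1 = 0)
    (z30 : M 3 0 = 0) (z31 : M 3 1 = 0) :
    M.det = (M 0 0 * M 1 1 - M 0 1 * M 1 0) * (M 2 2 * M 3 3 - M 2 3 * M 3 2) := by
  simp [Matrix.det_succ_row_zero, Fin.sum_univ_succ, z02, z03, z12, z13, z20, z21, z30, z31,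
    show (Fin.succ 2 : Fin 4) = 3 from rfl, show (Fin.castSucc 2 : Fin 4) = 2 from rfl,
    show (Fin.succAbove (1 : Fin 4) 2 : Fin 4) = 3 from rfl]
  ring

lemma mat4_eq {M : Matrix (Fin 4) (Fin 4) ℤ}
    {v00 v01 v02 v03 v10 v11 v12 v13 v20 v21 v22 v23 v30 v31 v32 v33 : ℤ}
    (h00 : M 0 0 = v00) (h01 : M 0 1 = v01) (h02 : M 0 2 = v02) (h03 : M 0 3 = v03)
    (h10 : M 1 0 = v10) (h11 : M 1 1 = v11) (h12 : M 1 2 = v12) (h13 : M 1 3 = v13)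
    (h20 : M 2 0 = v20) (h21 : M 2 1 = v21) (h22 : M 2 2 = v22) (h23 : M 2 3 = v23)
    (h30 : M 3 0 = v30) (h31 : M 3 1 = v31) (h32 : M 3 2 = v32) (h33 : M 3 3 = v33) :
    M = !![v00,v01,v02,v03; v10,v11,v12,v13; v20,v21,v22,v23; v30,v31,v32,v33] := by
  ext i j
  fin_cases i <;> fin_cases j <;>
    simp only [Matrix.cons_val', Matrix.cons_val_zero, Matrix.cons_val_one, Matrix.head_cons,
      Matrix.empty_val', Matrix.cons_val_fin_one, Matrix.head_fin_const, Matrix.cons_val_two,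
      Matrix.cons_val_three, Matrix.vecHead, Matrix.vecTail, Matrix.of_apply,
      Function.comp_apply] <;>
    assumption

set_option maxHeartbeats 1600000 in
lemma classify_s11 (M : Matrix (Fin 4) (Fin 4) ℤ) (hP : Pred M) : M ∈ L := by
  obtain ⟨hQ, hdet, hmod⟩ := hP
  have n0 := congrFun (congrFun hQ 0) 0
  have n1 := congrFun (congrFun hQ 1) 1
  have n2 := congrFun (congrFun hQ 2) 2
  have n3 := congrFun (congrFun hQ 3) 3
  simp [Matrix.mul_apply, Fin.sum_univ_four, QA2A2, Matrix.transpose_apply] at n0 n1 n2 n3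
  have r0 : R12 (M 0 0) (M 0 1) (M 0 2) (M 0 3) := root_class _ _ _ _ (by linarith)
  have r1 : R12 (M 1 0) (M 1 1) (M 1 2) (M 1 3) := root_class _ _ _ _ (by linarith)
  have r2 : R12 (M 2 2) (M 2 3) (M 2 0) (M 2 1) := root_class _ _ _ _ (by linarith)
  have r3 : R12 (M 3 2) (M 3 3) (M 3 0) (M 3 1) := root_class _ _ _ _ (by linarith)
  have m00 := hmod 0 0; have m01 := hmod 0 1; have m02 := hmod 0 2; have m03 := hmod 0 3
  have m10 := hmod 1 0; have m11 := hmod 1 1; have m12 := hmod 1 2; have m13 := hmod 1 3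
  have m20 := hmod 2 0; have m21 := hmod 2 1; have m22 := hmod 2 2; have m23 := hmod 2 3
  have m30 := hmod 3 0; have m31 := hmod 3 1; have m32 := hmod 3 2; have m33 := hmod 3 3
  simp [Matrix.mul_apply, Fin.sum_univ_four, A4, Matrix.sub_apply, Matrix.one_apply]
    at m00 m01 m02 m03 m10 m11 m12 m13 m20 m21 m22 m23 m30 m31 m32 m33
  have h01 := pair_class (M 0 0) (M 0 1) (M 0 2) (M 0 3) (M 1 0) (M 1 1) (M 1 2) (M 1 3)
    r0 r1 (by omega) (by omega) (by omega) (by omega) (by omega) (by omega) (by omega) (by omega)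
  have h23 := pair_class (M 2 2) (M 2 3) (M 2 0) (M 2 1) (M 3 2) (M 3 3) (M 3 0) (M 3 1)
    r2 r3 (by omega) (by omega) (by omega) (by omega) (by omega) (by omega) (by omega) (by omega)
  have z02 : M 0 2 = 0 := by omega
  have z03 : M 0 3 = 0 := by omega
  have z12 : M 1 2 = 0 := by omega
  have z13 : M 1 3 = 0 := by omega
  have z20 : M 2 0 = 0 := by omega
  have z21 : M 2 1 = 0 := by omega
  have z30 : M 3 0 = 0 := by omega
  have z31 : M 3 1 = 0 := by omega
  have hdd : (M 0 0 * M 1 1 - M 0 1 * M 1 0) * (M 2 2 * M 3 3 - M 2 3 * M 3 2) = 1 := by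
    rw [← det4_s11 M z02 z03 z12 z13 z20 z21 z30 z31]
    exact hdet
  rcases h01 with ⟨a1,a2,a3,a4,a5,a6,a7,a8⟩|⟨a1,a2,a3,a4,a5,a6,a7,a8⟩|⟨a1,a2,a3,a4,a5,a6,a7,a8⟩|⟨a1,a2,a3,a4,a5,a6,a7,a8⟩|⟨a1,a2,a3,a4,a5,a6,a7,a8⟩|⟨a1,a2,a3,a4,a5,a6,a7,a8⟩ <;>
    rcases h23 with ⟨b1,b2,b3,b4,b5,b6,b7,b8⟩|⟨b1,b2,b3,b4,b5,b6,b7,b8⟩|⟨b1,b2,b3,b4,b5,b6,b7,b8⟩|⟨b1,b2,b3,b4,b5,b6,b7,b8⟩|⟨b1,b2,b3,b4,b5,b6,b7,b8⟩|⟨b1,b2,b3,b4,b5,b6,b7,b8⟩ <;>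
    rw [a1, a2, a5, a6, b1, b2, b5, b6] at hdd <;>
    first
      | (rw [mat4_eq a1 a2 a3 a4 a5 a6 a7 a8 b3 b4 b1 b2 b7 b8 b5 b6]; decide)
      | exact absurd hdd (by norm_num)

instance Pred.dec (M : Matrix (Fin 4) (Fin 4) ℤ) : Decidable (Pred M) := by
  unfold Pred; infer_instance

lemma allL : ∀ M ∈ L, Pred M := by decide

theorem statement11' : Nat.card ↥(SOzero QA2A2) = 18 := by
  classical
  have hinj : Function.Injective
      (fun u : ↥(SOzero QA2A2) => ((u : (Matrix (Fin 4) (Fin 4) ℤ)ˣ) : Matrix (Fin 4) (Fin 4) ℤ)) := by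
    intro u v h
    exact Subtype.ext (Units.ext h)
  have hrange : Set.range
      (fun u : ↥(SOzero QA2A2) => ((u : (Matrix (Fin 4) (Fin 4) ℤ)ˣ) : Matrix (Fin 4) (Fin 4) ℤ))
      = ↑L.toFinset := by
    ext N
    simp only [Set.mem_range, List.coe_toFinset, Set.mem_setOf_eq]
    constructor
    · rintro ⟨u, rfl⟩
      exact classify_s11 _ ((mem_iff _).1 u.2)
    · intro hN
      have hPN : Pred N := allL N hN
      haveI : Invertible N.det := by rw [hPN.2.1]; exact invertibleOne
      refine ⟨⟨Matrix.unitOfDetInvertible N, ?_⟩, rfl⟩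
      exact (mem_iff _).2 hPN
  have h2 := Nat.card_range_of_injective hinj
  rw [← h2, hrange, Nat.card_coe_set_eq, Set.ncard_coe_finset]
  decide

theorem statement11 : Nat.card ↥(SOzero QA2A2) = 18 := statement11'
end

section
/- Let Λ_{A₁²A₂} be the lattice ℤ⁴ with Gram matrix [[2,0,0,0],[0,2,0,0],[0,0,2,−1],[0,0,−1,2]] (the orthogonal sum of two copies of A₁ and one copy of A₂). Then the group SO₀(Λ_{A₁²A₂}) of determinant-1 automorphisms of Λ_{A₁²A₂} that induce the identity map on the discriminant group is isomorphic to ℤ/2 × Sym(3); in particular it has order 12. -/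
/-!
STATEMENT 12: The group SO₀(Λ_{A₁²A₂}) of determinant-1 automorphisms of the
orthogonal sum of two copies of A₁ and one copy of A₂ that induce the identity map on
the discriminant group is isomorphic to ℤ/2 × Sym(3); in particular it has order 12.
-/

open Matrix

open Matrix

/-- The Gram matrix of the lattice A₁ ⊕ A₁ ⊕ A₂. -/
def QA1A1A2 : Matrix (Fin 4) (Fin 4) ℤ := !![2,0,0,0; 0,2,0,0; 0,0,2,-1; 0,0,-1,2]


namespace Stmt12Aux
open Matrix

def rootv : Fin 10 → Fin 4 → ℤ :=
  ![![1,0,0,0], ![-1,0,0,0], ![0,1,0,0], ![0,-1,0,0],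
    ![0,0,1,0], ![0,0,-1,0], ![0,0,0,1], ![0,0,0,-1], ![0,0,1,1], ![0,0,-1,-1]]

def Bf (x y : Fin 4 → ℤ) : ℤ :=
  2*x 0*y 0 + 2*x 1*y 1 + 2*x 2*y 2 - x 2*y 3 - x 3*y 2 + 2*x 3*y 3

def gA : Fin 3 → Fin 2 → ℤ := ![![1,1], ![0,1], ![0,0]]

def Wm (σ : Equiv.Perm (Fin 3)) : Matrix (Fin 2) (Fin 2) ℤ :=
  Matrix.of fun i j => gA (σ i.castSucc) j - gA (σ i.succ) j

abbrev G2 := Multiplicative (ZMod 2) × Equiv.Perm (Fin 3)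

def Mfun (p : G2) : Matrix (Fin 4) (Fin 4) ℤ :=
  let W := Wm p.2⁻¹
  let ε : ℤ := if (Multiplicative.toAdd p.1 : ZMod 2) = 0 then 1 else -1
  let s : ℤ := W 0 0 * W 1 1 - W 0 1 * W 1 0
  !![ε,0,0,0; 0,ε*s,0,0; 0,0,W 0 0, W 0 1; 0,0, W 1 0, W 1 1]

def vmat (t : Fin 4 → Fin 10) : Matrix (Fin 4) (Fin 4) ℤ := Matrix.of fun i j => rootv (t i) j

def detF (A : Matrix (Fin 4) (Fin 4) ℤ) : ℤ :=
    A 0 0 * (A 1 1 * (A 2 2 * A 3 3 - A 2 3 * A 3 2) - A 1 2 * (A 2 1 * A 3 3 - A 2 3 * A 3 1) + A 1 3 * (A 2 1 * A 3 2 - A 2 2 * A 3 1)) -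
    A 0 1 * (A 1 0 * (A 2 2 * A 3 3 - A 2 3 * A 3 2) - A 1 2 * (A 2 0 * A 3 3 - A 2 3 * A 3 0) + A 1 3 * (A 2 0 * A 3 2 - A 2 2 * A 3 0)) +
    A 0 2 * (A 1 0 * (A 2 1 * A 3 3 - A 2 3 * A 3 1) - A 1 1 * (A 2 0 * A 3 3 - A 2 3 * A 3 0) + A 1 3 * (A 2 0 * A 3 1 - A 2 1 * A 3 0)) -
    A 0 3 * (A 1 0 * (A 2 1 * A 3 2 - A 2 2 * A 3 1) - A 1 1 * (A 2 0 * A 3 2 - A 2 2 * A 3 0) + A 1 2 * (A 2 0 * A 3 1 - A 2 1 * A 3 0))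

def Qadj : Matrix (Fin 4) (Fin 4) ℤ := !![6,0,0,0; 0,6,0,0; 0,0,8,4; 0,0,4,8]

theorem detF_eq (A : Matrix (Fin 4) (Fin 4) ℤ) : A.det = detF A := by
  simp [Matrix.det_succ_row_zero, Fin.sum_univ_succ, detF, show (Fin.succ 2 : Fin 4) = 3 from rfl,
    show Fin.succAbove 2 2 = (3:Fin 4) from rfl, show Fin.succAbove 1 2 = (3:Fin 4) from rfl,
    show (Fin.castSucc 2 : Fin 4) = 2 from rfl, show Fin.succAbove 3 2 = (2:Fin 4) from rfl]
  ring

theorem root_classify (a b c d : ℤ) (h : 2*a*a + 2*b*b + 2*c*c - 2*c*d + 2*d*d = 2) :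
    ∃ k : Fin 10, ![a,b,c,d] = rootv k := by
  have ha1 : -1 ≤ a := by nlinarith [sq_nonneg b, sq_nonneg (c-d), sq_nonneg c, sq_nonneg d, sq_nonneg (a+1)]
  have ha2 : a ≤ 1 := by nlinarith [sq_nonneg b, sq_nonneg (c-d), sq_nonneg c, sq_nonneg d, sq_nonneg (a-1)]
  have hb1 : -1 ≤ b := by nlinarith [sq_nonneg a, sq_nonneg (c-d), sq_nonneg c, sq_nonneg d, sq_nonneg (b+1)]
  have hb2 : b ≤ 1 := by nlinarith [sq_nonneg a, sq_nonneg (c-d), sq_nonneg c, sq_nonneg d, sq_nonneg (b-1)]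
  have hc1 : -1 ≤ c := by nlinarith [sq_nonneg a, sq_nonneg b, sq_nonneg (c-d), sq_nonneg d, sq_nonneg (c+1)]
  have hc2 : c ≤ 1 := by nlinarith [sq_nonneg a, sq_nonneg b, sq_nonneg (c-d), sq_nonneg d, sq_nonneg (c-1)]
  have hd1 : -1 ≤ d := by nlinarith [sq_nonneg a, sq_nonneg b, sq_nonneg (c-d), sq_nonneg c, sq_nonneg (d+1)]
  have hd2 : d ≤ 1 := by nlinarith [sq_nonneg a, sq_nonneg b, sq_nonneg (c-d), sq_nonneg c, sq_nonneg (d-1)]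
  interval_cases a <;> interval_cases b <;> interval_cases c <;> interval_cases d <;>
    first | omega | decide

theorem mulQ_entry (U : Matrix (Fin 4) (Fin 4) ℤ) (i j : Fin 4) :
    (U * QA1A1A2 * Uᵀ) i j = Bf (U i) (U j) := by
  simp [Matrix.mul_apply, Fin.sum_univ_four, QA1A1A2, Bf, Matrix.transpose_apply]
  ring

theorem mfun_mul : ∀ p q : G2, Mfun (p*q) = Mfun p * Mfun q := by decide

theorem mfun_one : Mfun 1 = 1 := by decide

theorem mfun_inj : ∀ p q : G2, Mfun p = Mfun q → p = q := by decide

theorem mfun_orth : ∀ p : G2, Mfun p * QA1A1A2 * (Mfun p)ᵀ = QA1A1A2 := by decide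

theorem mfun_det : ∀ p : G2, detF (Mfun p) = 1 := by decide

theorem mfun_div : ∀ p : G2,
    QA1A1A2 * ((Qadj * (Mfun p - 1)).map (· / 12)) = Mfun p - 1 := by decide

theorem qadj_mulQ : Qadj * QA1A1A2 = (12 : ℤ) • (1 : Matrix (Fin 4) (Fin 4) ℤ) := by decide

-- classification decides
theorem stageA : ∀ a b : Fin 10, Bf (rootv a) (rootv b) = -1 → 4 ≤ a.val ∧ 4 ≤ b.val := by decide

theorem stageB : ∀ a b c : Fin 10, 4 ≤ b.val → 4 ≤ c.val → Bf (rootv b) (rootv c) = -1 →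
    Bf (rootv a) (rootv b) = 0 → Bf (rootv a) (rootv c) = 0 → a.val ≤ 3 := by decide

set_option maxHeartbeats 1000000 in
theorem stageC : ∀ t0 t1 t2 t3 : Fin 10, t0.val ≤ 3 → t1.val ≤ 3 → 4 ≤ t2.val → 4 ≤ t3.val →
    Bf (rootv t0) (rootv t1) = 0 → Bf (rootv t2) (rootv t3) = -1 →
    detF (vmat ![t0,t1,t2,t3]) = 1 →
    (∀ i j, (Qadj * (vmat ![t0,t1,t2,t3] - 1)) i j % 12 = 0) →
    ∃ p, vmat ![t0,t1,t2,t3] = Mfun p := by decide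

theorem third_of_div (U : Matrix (Fin 4) (Fin 4) ℤ) (Z : Matrix (Fin 4) (Fin 4) ℤ)
    (hZ : QA1A1A2 * Z = U - 1) :
    ∀ x : Fin 4 → ℚ, IsIntVec (Matrix.vecMul x (QA1A1A2.map ((↑) : ℤ → ℚ))) →
      IsIntVec (Matrix.vecMul x (U.map ((↑) : ℤ → ℚ)) - x) := by
  intro x hx
  have hmap : (U.map ((↑) : ℤ → ℚ)) - 1 =
      (QA1A1A2.map ((↑) : ℤ → ℚ)) * (Z.map ((↑) : ℤ → ℚ)) := by
    rw [← mapq_mul, hZ]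
    ext i j
    by_cases h : i = j <;>
      simp [Matrix.map_apply, Matrix.sub_apply, Matrix.one_apply, h]
  have h1 : Matrix.vecMul x (U.map ((↑) : ℤ → ℚ)) - x
      = Matrix.vecMul (Matrix.vecMul x (QA1A1A2.map ((↑) : ℤ → ℚ))) (Z.map ((↑) : ℤ → ℚ)) := by
    rw [Matrix.vecMul_vecMul, ← hmap, Matrix.vecMul_sub, Matrix.vecMul_one]
  rw [h1]
  exact intvec_vecMul hx _


theorem div_of_third (U : Matrix (Fin 4) (Fin 4) ℤ)
    (h3 : ∀ x : Fin 4 → ℚ, IsIntVec (Matrix.vecMul x (QA1A1A2.map ((↑) : ℤ → ℚ))) →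
      IsIntVec (Matrix.vecMul x (U.map ((↑) : ℤ → ℚ)) - x)) :
    ∀ i j, (Qadj * (U - 1)) i j % 12 = 0 := by
  intro i j
  set x : Fin 4 → ℚ := fun t => (Qadj i t : ℚ)/12 with hxdef
  have hx : IsIntVec (Matrix.vecMul x (QA1A1A2.map ((↑) : ℤ → ℚ))) := by
    intro k
    refine ⟨if i = k then 1 else 0, ?_⟩
    have h12 := congrFun (congrFun qadj_mulQ i) k
    simp only [Matrix.mul_apply, Fin.sum_univ_four, Matrix.smul_apply, Matrix.one_apply,
      smul_eq_mul] at h12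
    have h12q : ((Qadj i 0 : ℚ)) * (QA1A1A2 0 k : ℚ) + (Qadj i 1 : ℚ) * (QA1A1A2 1 k : ℚ)
        + (Qadj i 2 : ℚ) * (QA1A1A2 2 k : ℚ) + (Qadj i 3 : ℚ) * (QA1A1A2 3 k : ℚ)
        = 12 * (if i = k then (1:ℚ) else 0) := by
      have hq := congrArg (fun z : ℤ => (z : ℚ)) h12
      push_cast [apply_ite ((↑) : ℤ → ℚ)] at hq
      exact hq
    simp only [Matrix.vecMul, dotProduct, Fin.sum_univ_four, hxdef, Matrix.map_apply]
    push_cast [apply_ite ((↑) : ℤ → ℚ)]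
    linarith [h12q]
  obtain ⟨c, hc⟩ := h3 x hx j
  have key : (Qadj * (U - 1)) i j = 12 * c := by
    have hq : (((Qadj * (U - 1)) i j : ℤ) : ℚ) = 12 * (c:ℚ) := by
      simp only [Matrix.vecMul, dotProduct, Fin.sum_univ_four, Pi.sub_apply,
        Matrix.map_apply, hxdef] at hc
      rw [Matrix.mul_sub, Matrix.mul_one, Matrix.sub_apply]
      simp only [Matrix.mul_apply, Fin.sum_univ_four]
      push_cast
      linear_combination (12:ℚ) * hc
    exact_mod_cast hq
  omega

theorem mfun_unit (p : G2) : Mfun p * Mfun p⁻¹ = 1 := by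
  rw [← mfun_mul, mul_inv_cancel, mfun_one]

def uf (p : G2) : (Matrix (Fin 4) (Fin 4) ℤ)ˣ :=
  ⟨Mfun p, Mfun p⁻¹, mfun_unit p, by rw [← mfun_mul, inv_mul_cancel, mfun_one]⟩

theorem uf_mem (p : G2) : uf p ∈ SOzero QA1A1A2 := by
  refine ⟨mfun_orth p, by rw [detF_eq]; exact mfun_det p, ?_⟩
  exact third_of_div (Mfun p) _ (mfun_div p)

def phi : G2 →* ↥(SOzero QA1A1A2) :=
  MonoidHom.codRestrict
    (MonoidHom.mk' uf (fun a b => Units.ext (mfun_mul a b))) _ uf_mem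

theorem phi_bij : Function.Bijective phi := by
  constructor
  · intro a b hab
    apply mfun_inj
    have : (phi a : (Matrix (Fin 4) (Fin 4) ℤ)ˣ) = (phi b : (Matrix (Fin 4) (Fin 4) ℤ)ˣ) := by
      rw [hab]
    exact congrArg Units.val this
  · rintro ⟨u, hu1, hu2, hu3⟩
    set U : Matrix (Fin 4) (Fin 4) ℤ := (u : Matrix (Fin 4) (Fin 4) ℤ) with hUdef
    have he : ∀ i j, Bf (U i) (U j) = QA1A1A2 i j := by
      intro i j
      rw [← mulQ_entry, hu1]
    have hrow : ∀ i : Fin 4, ∃ k : Fin 10, U i = rootv k := by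
      intro i
      have h2 : Bf (U i) (U i) = 2 := by rw [he i i]; fin_cases i <;> decide
      have heq : 2*(U i 0)*(U i 0) + 2*(U i 1)*(U i 1) + 2*(U i 2)*(U i 2)
          - 2*(U i 2)*(U i 3) + 2*(U i 3)*(U i 3) = 2 := by
        simp only [Bf] at h2; linarith
      obtain ⟨k, hk⟩ := root_classify _ _ _ _ heq
      refine ⟨k, ?_⟩
      funext j
      rw [← hk]
      fin_cases j <;> rfl
    obtain ⟨t0, h0⟩ := hrow 0
    obtain ⟨t1, h1⟩ := hrow 1
    obtain ⟨t2, h2⟩ := hrow 2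
    obtain ⟨t3, h3⟩ := hrow 3
    have hU : U = vmat ![t0,t1,t2,t3] := by
      ext i j
      fin_cases i <;> simp [vmat, h0, h1, h2, h3]
    have e23 : Bf (rootv t2) (rootv t3) = -1 := by rw [← h2, ← h3, he 2 3]; decide
    have e01 : Bf (rootv t0) (rootv t1) = 0 := by rw [← h0, ← h1, he 0 1]; decide
    have e02 : Bf (rootv t0) (rootv t2) = 0 := by rw [← h0, ← h2, he 0 2]; decide
    have e03 : Bf (rootv t0) (rootv t3) = 0 := by rw [← h0, ← h3, he 0 3]; decide
    have e12 : Bf (rootv t1) (rootv t2) = 0 := by rw [← h1, ← h2, he 1 2]; decide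
    have e13 : Bf (rootv t1) (rootv t3) = 0 := by rw [← h1, ← h3, he 1 3]; decide
    obtain ⟨ha2, ha3⟩ := stageA t2 t3 e23
    have hb0 : t0.val ≤ 3 := stageB t0 t2 t3 ha2 ha3 e23 e02 e03
    have hb1 : t1.val ≤ 3 := stageB t1 t2 t3 ha2 ha3 e23 e12 e13
    have hdet : detF (vmat ![t0,t1,t2,t3]) = 1 := by
      rw [← hU, ← detF_eq]; exact hu2
    have hdiv : ∀ i j, (Qadj * (vmat ![t0,t1,t2,t3] - 1)) i j % 12 = 0 := by
      rw [← hU]; exact div_of_third U hu3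
    obtain ⟨p, hp⟩ := stageC t0 t1 t2 t3 hb0 hb1 ha2 ha3 e01 e23 hdet hdiv
    refine ⟨p, ?_⟩
    apply Subtype.ext
    apply Units.ext
    show Mfun p = U
    rw [hU, hp]

theorem card12 : Nat.card G2 = 12 := by
  rw [Nat.card_eq_fintype_card, Fintype.card_prod, Fintype.card_perm]
  rfl

end Stmt12Aux

theorem statement12 :
    Nonempty (↥(SOzero QA1A1A2) ≃* (Multiplicative (ZMod 2) × Equiv.Perm (Fin 3))) ∧
    Nat.card ↥(SOzero QA1A1A2) = 12 := by
  have e := MulEquiv.ofBijective Stmt12Aux.phi Stmt12Aux.phi_bij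
  refine ⟨⟨e.symm⟩, ?_⟩
  rw [← Nat.card_congr e.toEquiv]
  exact Stmt12Aux.card12
end
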